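/- arXiv:2101.04100 — 9 statements merged into one kernel-verified Lean document; each statement's English description precedes it below -/
import Mathlib

section
/- Let d ≥ 1 and let S : ℂ → (ℂ^d → ℂ^d) be a family of maps satisfying, for all z ∈ ℂ: S_z ∘ S_{−z} = id and S_{−z} ∘ S_z = id (time-symmetry), and conj(S_z(x)) = S_{conj z}(conj x) for all x ∈ ℂ^d (realness), where conj denotes componentwise complex conjugation on ℂ^d. Let α_1, …, α_s ∈ ℂ satisfy the symmetric-conjugate condition α_{s+1−j} = conj(α_j) for j = 1, …, s, and for h ∈ ℝ define the composition ψ_h = S_{α_s h} ∘ S_{α_{s−1} h} ∘ ⋯ ∘ S_{α_1 h}. Then for every real h the adjoint of ψ_h equals its complex conjugate, i.e. ψ_{−h} ∘ (conj ∘ ψ_h ∘ conj) = id. -/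
/-- Componentwise complex conjugation on `ℂ^d`. -/
def vecConj {d : ℕ} (x : Fin d → ℂ) : Fin d → ℂ := fun i => starRingEnd ℂ (x i)

theorem vecConj_vecConj {d : ℕ} (x : Fin d → ℂ) : vecConj (vecConj x) = x := by
  funext i; simp [vecConj]

theorem ofFn_rev' {β : Type*} (n : ℕ) (f : Fin n → β) :
    List.ofFn (fun i => f i.rev) = (List.ofFn f).reverse := by
  apply List.ext_getElem <;> simp [List.getElem_reverse, Fin.rev]
  intro i h1
  congr 1
  simp [Fin.ext_iff]
  omega

/-- for a time-symmetric, real basic method `S` and a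
symmetric-conjugate sequence of coefficients, the adjoint of the composition
`ψ_h = S_{α_s h} ∘ ⋯ ∘ S_{α_1 h}` equals its complex conjugate, i.e.
`ψ_{-h} ∘ (conj ∘ ψ_h ∘ conj) = id`. -/
theorem symmetric_conjugate_adjoint_eq_conj
    (d s : ℕ) (hd : 1 ≤ d)
    (S : ℂ → (Fin d → ℂ) → (Fin d → ℂ))
    (hTS₁ : ∀ z : ℂ, S z ∘ S (-z) = id)
    (hTS₂ : ∀ z : ℂ, S (-z) ∘ S z = id)
    (hReal : ∀ (z : ℂ) (x : Fin d → ℂ), vecConj (S z x) = S (starRingEnd ℂ z) (vecConj x))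
    (α : Fin s → ℂ)
    (hSC : ∀ j : Fin s, α (Fin.rev j) = starRingEnd ℂ (α j))
    (ψ : ℝ → (Fin d → ℂ) → (Fin d → ℂ))
    (hψ : ∀ (h : ℝ) (x : Fin d → ℂ),
      ψ h x = (List.ofFn fun j : Fin s => S (α j * (h : ℂ))).foldl (fun y f => f y) x)
    (h : ℝ) :
    ψ (-h) ∘ (vecConj ∘ ψ h ∘ vecConj) = id := by
  -- push vecConj through a fold
  have conj_fold : ∀ (l : List ℂ) (x : Fin d → ℂ),
      vecConj ((l.map S).foldl (fun y f => f y) x) =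
        ((l.map (fun z => S (starRingEnd ℂ z))).foldl (fun y f => f y) (vecConj x)) := by
    intro l
    induction l with
    | nil => intro x; simp
    | cons a t ih =>
        intro x
        simp only [List.map_cons, List.foldl_cons]
        rw [ih, hReal]
  -- cancellation lemma
  have cancel : ∀ (l : List ℂ) (x : Fin d → ℂ),
      (l.map (fun z => S (-z))).foldl (fun y f => f y)
        ((l.reverse.map S).foldl (fun y f => f y) x) = x := by
    intro l
    induction l with
    | nil => intro x; simp
    | cons a t ih =>
        intro x
        simp only [List.reverse_cons, List.map_append, List.foldl_append,
          List.map_cons, List.foldl_cons, List.map_nil, List.foldl_nil]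
        have : S (-a) (S a ((t.reverse.map S).foldl (fun y f => f y) x)) =
            (t.reverse.map S).foldl (fun y f => f y) x := by
          have := congrFun (hTS₂ a) ((t.reverse.map S).foldl (fun y f => f y) x)
          simpa using this
        rw [this, ih]
  funext x
  set L : List ℂ := List.ofFn (fun j : Fin s => α j * (h : ℂ)) with hL
  have hinner : vecConj (ψ h (vecConj x)) = (L.reverse.map S).foldl (fun y f => f y) x := by
    rw [hψ]
    have h1 : (List.ofFn fun j : Fin s => S (α j * (h : ℂ))) = L.map S := by
      rw [hL, List.map_ofFn]; rfl
    rw [h1, conj_fold, vecConj_vecConj]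
    congr 1
    rw [hL, ← ofFn_rev', List.map_ofFn, List.map_ofFn]
    congr 1
    funext j
    simp only [Function.comp]
    rw [map_mul, ← hSC, Complex.conj_ofReal]
  simp only [Function.comp_apply, id_eq]
  rw [hψ, hinner]
  have h2 : (List.ofFn fun j : Fin s => S (α j * ((-h : ℝ) : ℂ))) = L.map (fun z => S (-z)) := by
    rw [hL, List.map_ofFn]
    congr 1
    funext j
    simp only [Function.comp]
    push_cast
    ring_nf
  rw [h2, cancel]
end

section
/- Fix d ≥ 1, a real matrix A, and a time-symmetric second-order real basic method S for A. Let n ≥ 2 and let α_1, …, α_s ∈ ℂ be left-right palindromic, i.e. α_{s+1−j} = α_j for all j, with α_1 + ⋯ + α_s = 1, and suppose the composition P(h) = S(α_s h)·S(α_{s−1} h)⋯S(α_1 h) is of order 2n, i.e. (fun h : ℝ => P(h) − exp(h·A)) is O(h^{2n+1}) as h → 0. Let R(h) be the entrywise real part of P(h). Then (fun h : ℝ => R(h) − exp(h·A)) is O(h^{2n+1}) as h → 0 (R is of order 2n), and R is pseudo-symmetric of order 4n+1, i.e. (fun h : ℝ => R(−h)·R(h) − 1) is O(h^{4n+2}) as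 h → 0. -/
open Matrix Asymptotics Filter NormedSpace

attribute [local instance] Matrix.normedAddCommGroup Matrix.normedSpace

lemma tele {M : Type*} [Monoid M] : ∀ (m : ℕ) (f g : Fin m → M), (∀ k, f k * g k = 1) →
    (List.ofFn f).prod * ((List.ofFn g).reverse).prod = 1 := by
  intro m
  induction m with
  | zero => intro f g _; simp
  | succ m ih =>
    intro f g hfg
    rw [List.ofFn_succ, List.ofFn_succ, List.reverse_cons, List.prod_cons,
      List.prod_append, List.prod_cons, List.prod_nil, mul_one]
    calc f 0 * (List.ofFn fun i => f i.succ).prod *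
        ((List.ofFn fun i => g i.succ).reverse.prod * g 0)
        = f 0 * ((List.ofFn fun i => f i.succ).prod *
          (List.ofFn fun i => g i.succ).reverse.prod) * g 0 := by
          rw [mul_assoc, mul_assoc, mul_assoc]
      _ = f 0 * g 0 := by rw [ih _ _ fun k => hfg k.succ, mul_one]
      _ = 1 := hfg 0

lemma ofFn_rev'_s1 {β : Type*} {m : ℕ} (f g : Fin m → β) (hfg : ∀ j, f j = g (Fin.rev j)) :
    List.ofFn f = (List.ofFn g).reverse := by
  apply List.ext_getElem
  · simp
  · intro i h1 h2
    simp only [List.length_ofFn] at h1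
    rw [List.getElem_ofFn, List.getElem_reverse, List.getElem_ofFn]
    rw [hfg]
    congr 1
    ext
    simp only [Fin.rev, List.length_ofFn]
    omega

lemma matNormMapEq {α β : Type*} [NormedAddCommGroup α] [NormedAddCommGroup β]
    {k l : ℕ} (M : Matrix (Fin k) (Fin l) α) (f : α → β) (hf : ∀ x, ‖f x‖ = ‖x‖) :
    ‖M.map f‖ = ‖M‖ := by
  refine le_antisymm ?_ ?_
  · refine (Matrix.norm_le_iff (norm_nonneg _)).2 fun i j => ?_
    rw [Matrix.map_apply, hf]
    exact Matrix.norm_entry_le_entrywise_sup_norm M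
  · refine (Matrix.norm_le_iff (norm_nonneg _)).2 fun i j => ?_
    rw [← hf (M i j)]
    exact Matrix.norm_entry_le_entrywise_sup_norm (M.map f)

lemma matNormMul {k : ℕ} (M N : Matrix (Fin k) (Fin k) ℂ) : ‖M * N‖ ≤ k * ‖M‖ * ‖N‖ := by
  refine (Matrix.norm_le_iff (by positivity)).2 fun i j => ?_
  calc ‖(M * N) i j‖ = ‖∑ p, M i p * N p j‖ := by rw [Matrix.mul_apply]
    _ ≤ ∑ p, ‖M i p * N p j‖ := norm_sum_le _ _
    _ ≤ ∑ _p : Fin k, ‖M‖ * ‖N‖ := by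
        refine Finset.sum_le_sum fun p _ => ?_
        rw [norm_mul]
        exact mul_le_mul (Matrix.norm_entry_le_entrywise_sup_norm M)
          (Matrix.norm_entry_le_entrywise_sup_norm N) (norm_nonneg _) (norm_nonneg _)
    _ = k * ‖M‖ * ‖N‖ := by simp [Finset.sum_const, mul_assoc]

lemma bigOTransfer {E F : Type*} [SeminormedAddCommGroup E] [SeminormedAddCommGroup F]
    {l : Filter ℝ} {f : ℝ → E} {f' : ℝ → F} {g : ℝ → ℝ}
    (hn : ∀ x, ‖f' x‖ = ‖f x‖) (h : f =O[l] g) : f' =O[l] g := by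
  rw [isBigO_iff] at h ⊢
  obtain ⟨c, hc⟩ := h
  exact ⟨c, hc.mono fun x hx => by rw [hn]; exact hx⟩

lemma expMap (d : ℕ) (A : Matrix (Fin d) (Fin d) ℝ) (h : ℝ) :
    (exp (h • A)).map Complex.ofReal = exp ((h : ℂ) • A.map Complex.ofReal) := by
  letI : NormedRing (Matrix (Fin d) (Fin d) ℝ) := Matrix.linftyOpNormedRing
  letI : NormedAlgebra ℝ (Matrix (Fin d) (Fin d) ℝ) := Matrix.linftyOpNormedAlgebra
  letI : NormedRing (Matrix (Fin d) (Fin d) ℂ) := Matrix.linftyOpNormedRing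
  letI : NormedAlgebra ℝ (Matrix (Fin d) (Fin d) ℂ) := Matrix.linftyOpNormedAlgebra
  letI : NormedAlgebra ℚ (Matrix (Fin d) (Fin d) ℝ) := Matrix.linftyOpNormedAlgebra
  letI : NormedAlgebra ℚ (Matrix (Fin d) (Fin d) ℂ) := Matrix.linftyOpNormedAlgebra
  haveI : @CompleteSpace (Matrix (Fin d) (Fin d) ℝ)
      (PseudoMetricSpace.toUniformSpace (self := SeminormedRing.toPseudoMetricSpace)) :=
    FiniteDimensional.complete ℝ _
  have hcoe : ⇑(Complex.ofRealAm.mapMatrix (m := Fin d)) = fun M : Matrix (Fin d) (Fin d) ℝ =>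
      M.map Complex.ofReal := by funext M; rfl
  have hcont : Continuous (Complex.ofRealAm.mapMatrix (m := Fin d)) := by
    rw [hcoe]; exact continuous_id.matrix_map Complex.continuous_ofReal
  have h1 := map_exp (Complex.ofRealAm.mapMatrix (m := Fin d)) hcont (h • A)
  rw [hcoe] at h1
  have h2 : (h • A).map Complex.ofReal = (h : ℂ) • A.map Complex.ofReal := by
    ext i j; simp [Complex.real_smul]
  have h3 : exp ((h : ℂ) • A.map Complex.ofReal) = exp ((h : ℂ) • A.map Complex.ofReal) :=
    rfl
  calc (exp (h • A)).map Complex.ofReal = exp ((h • A).map Complex.ofReal) := h1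
    _ = exp ((h : ℂ) • A.map Complex.ofReal) := by rw [h2, h3]

lemma sq_helper {M : Type*} [AddCommGroup M] (t x u : M) (h : t + t = u) :
    t + x - u = -(t - x) := by rw [← h]; abel


/-- Proposition 1 of the paper, linear/matrix form, pseudo-symmetry part:
the real part of a left-right palindromic composition of order `2n` of a
time-symmetric second-order real basic method is again of order `2n` and is
pseudo-symmetric of order `4n+1`. -/
theorem palindromic_real_part_order_and_pseudo_symmetry
    (d s n : ℕ) (hd : 1 ≤ d) (hn : 2 ≤ n)
    (A : Matrix (Fin d) (Fin d) ℝ)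
    (S : ℂ → Matrix (Fin d) (Fin d) ℂ)
    -- `S` is analytic
    (hAnal : ∀ z : ℂ, AnalyticAt ℂ S z)
    -- `S` is time-symmetric
    (hTS : ∀ z : ℂ, S z * S (-z) = 1)
    -- `S` is real: the entrywise conjugate of `S z` is `S z̄`
    (hReal : ∀ z : ℂ, (S z).map (starRingEnd ℂ) = S (starRingEnd ℂ z))
    -- `S` is a second-order approximation of `exp (h A)`
    (hOrd2 : (fun h : ℝ => S (h : ℂ) - exp ((h : ℂ) • A.map Complex.ofReal))
      =O[nhds 0] fun h : ℝ => h ^ 3)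
    -- left-right palindromic coefficients with `∑ α_j = 1`
    (α : Fin s → ℂ)
    (hpal : ∀ j : Fin s, α (Fin.rev j) = α j)
    (hsum : ∑ j, α j = 1)
    -- the composition `P h = S (α_s h) ⋯ S (α_1 h)`
    (P : ℝ → Matrix (Fin d) (Fin d) ℂ)
    (hP : ∀ h : ℝ, P h = ((List.ofFn fun j : Fin s => S (α j * (h : ℂ))).reverse).prod)
    -- ... is of order `2n`
    (hPord : (fun h : ℝ => P h - exp ((h : ℂ) • A.map Complex.ofReal))
      =O[nhds 0] fun h : ℝ => h ^ (2 * n + 1))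
    -- `R h` is the entrywise real part of `P h`
    (R : ℝ → Matrix (Fin d) (Fin d) ℝ)
    (hR : ∀ h : ℝ, R h = (P h).map Complex.re) :
    ((fun h : ℝ => R h - exp (h • A)) =O[nhds 0] fun h : ℝ => h ^ (2 * n + 1)) ∧
      ((fun h : ℝ => R (-h) * R h - 1) =O[nhds 0] fun h : ℝ => h ^ (4 * n + 2)) := by
  have conjExp : ∀ h : ℝ, (exp ((h : ℂ) • A.map Complex.ofReal)).map (starRingEnd ℂ)
      = exp ((h : ℂ) • A.map Complex.ofReal) := by
    intro h
    rw [← expMap, Matrix.map_map]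
    have hc : ⇑(starRingEnd ℂ) ∘ Complex.ofReal = Complex.ofReal :=
      funext fun x => Complex.conj_ofReal x
    rw [hc]
  -- P (-h) is the inverse of P h
  have hPinv : ∀ h : ℝ, P (-h) * P h = 1 := by
    intro h
    rw [hP, hP]
    have hlist : (List.ofFn fun j : Fin s => S (α j * ((-h : ℝ) : ℂ)))
        = (List.ofFn fun k : Fin s => S (-(α k * (h : ℂ)))).reverse := by
      refine ofFn_rev'_s1 _ _ fun j => ?_
      rw [hpal j]
      congr 1
      push_cast
      ring
    rw [hlist, List.reverse_reverse]
    exact tele s _ _ fun k => by simpa using hTS (-(α k * (h : ℂ)))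
  have hQinv : ∀ h : ℝ, (P (-h)).map (starRingEnd ℂ) * (P h).map (starRingEnd ℂ) = 1 := by
    intro h
    rw [← Matrix.map_mul, hPinv]
    ext i j
    simp [Matrix.map_apply, Matrix.one_apply, apply_ite (starRingEnd ℂ)]
  -- the conjugate of P also approximates exp to order 2n
  have hQord : (fun h : ℝ => (P h).map (starRingEnd ℂ)
      - exp ((h : ℂ) • A.map Complex.ofReal)) =O[nhds 0] fun h : ℝ => h ^ (2 * n + 1) := by
    refine bigOTransfer (f := fun h : ℝ => P h - exp ((h : ℂ) • A.map Complex.ofReal))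
      (fun h => ?_) hPord
    have hsub : (P h).map (starRingEnd ℂ) - exp ((h : ℂ) • A.map Complex.ofReal)
        = (P h - exp ((h : ℂ) • A.map Complex.ofReal)).map (starRingEnd ℂ) := by
      rw [Matrix.map_sub _ fun a b => map_sub (starRingEnd ℂ) a b, conjExp]
    rw [hsub, matNormMapEq _ _ fun z => RCLike.norm_conj z]
  -- E := P - conj P is O(h^(2n+1))
  have hE : (fun h : ℝ => P h - (P h).map (starRingEnd ℂ)) =O[nhds 0]
      fun h : ℝ => h ^ (2 * n + 1) :=
    (hPord.sub hQord).congr_left fun h => sub_sub_sub_cancel_right _ _ _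
  have hEneg : (fun h : ℝ => P (-h) - (P (-h)).map (starRingEnd ℂ)) =O[nhds 0]
      fun h : ℝ => h ^ (2 * n + 1) := by
    have hneg : Tendsto (fun h : ℝ => -h) (nhds 0) (nhds 0) := by
      simpa using continuous_neg.tendsto (0 : ℝ)
    refine (hE.comp_tendsto hneg).trans ?_
    rw [isBigO_iff]
    exact ⟨1, Eventually.of_forall fun h => by simp⟩
  -- the complexification of R
  have hRC : ∀ h : ℝ, (R h).map Complex.ofReal
      = (2 : ℂ)⁻¹ • (P h + (P h).map (starRingEnd ℂ)) := by
    intro h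
    ext i j
    simp only [hR, Matrix.map_apply, Matrix.smul_apply, Matrix.add_apply, smul_eq_mul]
    rw [Complex.add_conj]
    push_cast
    ring
  -- part 1
  have part1 : (fun h : ℝ => R h - exp (h • A)) =O[nhds 0] fun h : ℝ => h ^ (2 * n + 1) := by
    refine bigOTransfer (f := (2 : ℂ)⁻¹ • fun h : ℝ =>
        ((P h - exp ((h : ℂ) • A.map Complex.ofReal))
          + ((P h).map (starRingEnd ℂ) - exp ((h : ℂ) • A.map Complex.ofReal))))
      (fun h => ?_) ((hPord.add hQord).const_smul_left _)
    simp only [Pi.smul_apply]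
    have hmap : (R h - exp (h • A)).map Complex.ofReal
        = (2 : ℂ)⁻¹ • ((P h - exp ((h : ℂ) • A.map Complex.ofReal))
          + ((P h).map (starRingEnd ℂ) - exp ((h : ℂ) • A.map Complex.ofReal))) := by
      rw [Matrix.map_sub _ (fun a b => by push_cast; ring), hRC, expMap]
      have h2 : (2 : ℂ)⁻¹ • (exp ((h : ℂ) • A.map Complex.ofReal)
          + exp ((h : ℂ) • A.map Complex.ofReal))
          = exp ((h : ℂ) • A.map Complex.ofReal) := by
        rw [smul_add, ← add_smul]
        norm_num
      conv_lhs => rw [← h2]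
      rw [← smul_sub]
      congr 1
      abel
    rw [← matNormMapEq (R h - exp (h • A)) Complex.ofReal fun x => Complex.norm_real x, hmap]
  refine ⟨part1, ?_⟩
  -- the key algebraic identity
  have key : ∀ h : ℝ, (R (-h) * R h - 1).map Complex.ofReal
      = -((4 : ℂ)⁻¹ • ((P (-h) - (P (-h)).map (starRingEnd ℂ))
        * (P h - (P h).map (starRingEnd ℂ)))) := by
    intro h
    have hmapmul : (R (-h) * R h - 1).map Complex.ofReal
        = (R (-h)).map Complex.ofReal * (R h).map Complex.ofReal - 1 := by
      rw [Matrix.map_sub _ (fun a b => by push_cast; ring)]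
      congr 1
      · exact Matrix.map_mul (f := Complex.ofRealHom)
      · ext i j
        simp [Matrix.map_apply, Matrix.one_apply, apply_ite Complex.ofReal]
    rw [hmapmul, hRC, hRC]
    have hac := hPinv h
    have hbq := hQinv h
    have e1 : (P (-h) + (P (-h)).map (starRingEnd ℂ)) * (P h + (P h).map (starRingEnd ℂ))
        = (P (-h) * P h + (P (-h)).map (starRingEnd ℂ) * (P h).map (starRingEnd ℂ))
          + (P (-h) * (P h).map (starRingEnd ℂ) + (P (-h)).map (starRingEnd ℂ) * P h) := by
      noncomm_ring
    have e2 : (P (-h) - (P (-h)).map (starRingEnd ℂ)) * (P h - (P h).map (starRingEnd ℂ))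
        = (P (-h) * P h + (P (-h)).map (starRingEnd ℂ) * (P h).map (starRingEnd ℂ))
          - (P (-h) * (P h).map (starRingEnd ℂ) + (P (-h)).map (starRingEnd ℂ) * P h) := by
      noncomm_ring
    rw [smul_mul_assoc, mul_smul_comm, smul_smul, e1, e2, hac, hbq]
    have h44 : (2 : ℂ)⁻¹ * 2⁻¹ = 4⁻¹ := by norm_num
    rw [h44, smul_add, smul_sub]
    refine sq_helper _ _ _ ?_
    rw [← add_smul]
    have h12 : ((4 : ℂ)⁻¹ + 4⁻¹) = 2⁻¹ := by norm_num
    rw [h12, smul_add, ← add_smul]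
    norm_num
  -- norm bound
  have hbound : ∀ h : ℝ, ‖R (-h) * R h - 1‖
      ≤ (d / 4 : ℝ) * (‖P (-h) - (P (-h)).map (starRingEnd ℂ)‖
        * ‖P h - (P h).map (starRingEnd ℂ)‖) := by
    intro h
    rw [← matNormMapEq (R (-h) * R h - 1) Complex.ofReal fun x => Complex.norm_real x, key h,
      norm_neg, norm_smul]
    have h4 : ‖(4 : ℂ)⁻¹‖ = 4⁻¹ := by simp
    rw [h4]
    calc (4 : ℝ)⁻¹ * ‖(P (-h) - (P (-h)).map (starRingEnd ℂ))
          * (P h - (P h).map (starRingEnd ℂ))‖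
        ≤ (4 : ℝ)⁻¹ * (d * ‖P (-h) - (P (-h)).map (starRingEnd ℂ)‖
          * ‖P h - (P h).map (starRingEnd ℂ)‖) := by
          exact mul_le_mul_of_nonneg_left (matNormMul _ _) (by norm_num)
      _ = (d / 4 : ℝ) * (‖P (-h) - (P (-h)).map (starRingEnd ℂ)‖
          * ‖P h - (P h).map (starRingEnd ℂ)‖) := by ring
  have hprod : (fun h : ℝ => ‖P (-h) - (P (-h)).map (starRingEnd ℂ)‖
      * ‖P h - (P h).map (starRingEnd ℂ)‖) =O[nhds 0] fun h : ℝ => h ^ (4 * n + 2) := by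
    have := hEneg.norm_left.mul hE.norm_left
    refine this.trans ?_
    rw [isBigO_iff]
    refine ⟨1, Eventually.of_forall fun h => ?_⟩
    have hn2 : h ^ (2 * n + 1) * h ^ (2 * n + 1) = h ^ (4 * n + 2) := by
      rw [← pow_add]; congr 1; ring
    rw [one_mul, hn2]
  refine IsBigO.trans ?_ hprod
  rw [isBigO_iff]
  refine ⟨(d / 4 : ℝ), Eventually.of_forall fun h => ?_⟩
  rw [Real.norm_of_nonneg (by positivity)]
  exact hbound h
end

section
/- Fix d = 2m, a real matrix A, and a time-symmetric second-order real basic method S for A which in addition is symplectic: S(z)ᵀ·J·S(z) = J for all z ∈ ℂ, where J is the canonical symplectic 2m×2m matrix. Let n ≥ 2 and let α_1, …, α_s ∈ ℂ be left-right palindromic (α_{s+1−j} = α_j) with α_1 + ⋯ + α_s = 1, and suppose the composition P(h) = S(α_s h)⋯S(α_1 h) satisfies (fun h : ℝ => P(h) − exp(h·A)) = O(h^{2n+1}) as h → 0. Let R(h) be the entrywise real part of P(h). Then R is pseudo-symplectic of order 4n+1, i.e. (fun h : ℝ => R(h)ᵀ·J·R(h) − J) is O(h^{4n+2}) as h → 0.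 -/
open Matrix Asymptotics Filter NormedSpace

attribute [local instance] Matrix.normedAddCommGroup Matrix.normedSpace


section expmap
attribute [local instance] Matrix.linftyOpNormedRing Matrix.linftyOpNormedAlgebra

lemma exp_map_ofReal (k : ℕ) (M : Matrix (Fin k) (Fin k) ℝ) :
    NormedSpace.exp (M.map Complex.ofReal) = (NormedSpace.exp M).map Complex.ofReal := by
  have hc : Continuous (Complex.ofRealHom.mapMatrix : Matrix (Fin k) (Fin k) ℝ →+* Matrix (Fin k) (Fin k) ℂ) := by
    have : Continuous fun M : Matrix (Fin k) (Fin k) ℝ => M.map Complex.ofReal :=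
      continuous_id.matrix_map Complex.continuous_ofReal
    exact this
  haveI : @CompleteSpace (Matrix (Fin k) (Fin k) ℝ) (Matrix.linftyOpNormedRing (α := ℝ)).toUniformSpace := FiniteDimensional.complete ℝ _
  have := map_exp (Complex.ofRealHom.mapMatrix : Matrix (Fin k) (Fin k) ℝ →+* Matrix (Fin k) (Fin k) ℂ) hc M
  exact this.symm

end expmap

section auxnorm


/-- product of symplectic-like matrices is symplectic-like -/
lemma list_prod_symplectic {k : ℕ} (Jc : Matrix (Fin k) (Fin k) ℂ)
    (L : List (Matrix (Fin k) (Fin k) ℂ)) (hL : ∀ M ∈ L, Mᵀ * Jc * M = Jc) :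
    (L.prod)ᵀ * Jc * L.prod = Jc := by
  induction L with
  | nil => simp
  | cons a l ih =>
    have ha := hL a (List.mem_cons_self)
    have hl := ih (fun M hM => hL M (List.mem_cons_of_mem _ hM))
    rw [List.prod_cons, transpose_mul]
    calc l.prodᵀ * aᵀ * Jc * (a * l.prod) = l.prodᵀ * (aᵀ * Jc * a) * l.prod := by
          simp only [Matrix.mul_assoc]
      _ = l.prodᵀ * Jc * l.prod := by rw [ha]
      _ = Jc := hl

lemma matrix_norm_mul_le {k : ℕ} (A B : Matrix (Fin k) (Fin k) ℂ) :
    ‖A * B‖ ≤ (k : ℝ) * ‖A‖ * ‖B‖ := by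
  rcases Nat.eq_zero_or_pos k with hk | hk
  · subst hk
    have : A * B = 0 := by ext i j; exact absurd i.2 (by omega)
    simp [this]
  refine (Matrix.norm_le_iff (by positivity)).2 fun i j => ?_
  calc ‖(A * B) i j‖ = ‖∑ t, A i t * B t j‖ := by rw [Matrix.mul_apply]
    _ ≤ ∑ t, ‖A i t * B t j‖ := norm_sum_le _ _
    _ ≤ ∑ _t : Fin k, ‖A‖ * ‖B‖ := by
        refine Finset.sum_le_sum fun t _ => ?_
        rw [norm_mul]
        exact mul_le_mul (Matrix.norm_entry_le_entrywise_sup_norm A)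
          (Matrix.norm_entry_le_entrywise_sup_norm B) (norm_nonneg _) (norm_nonneg _)
    _ = (k : ℝ) * ‖A‖ * ‖B‖ := by
        simp [Finset.sum_const, mul_assoc]

lemma matrix_norm_transpose_le {k : ℕ} (A : Matrix (Fin k) (Fin k) ℂ) : ‖Aᵀ‖ ≤ ‖A‖ := by
  refine (Matrix.norm_le_iff (norm_nonneg _)).2 fun i j => ?_
  exact Matrix.norm_entry_le_entrywise_sup_norm A

end auxnorm


lemma map_ofReal_mul {k : ℕ} (M N : Matrix (Fin k) (Fin k) ℝ) :
    (M * N).map Complex.ofReal = M.map Complex.ofReal * N.map Complex.ofReal := by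
  ext i j
  simp [Matrix.mul_apply, Matrix.map_apply, Complex.ofReal_sum, Complex.ofReal_mul]


lemma exp_map_ofReal' (k : ℕ) (M : Matrix (Fin k) (Fin k) ℝ) :
    NormedSpace.exp (M.map Complex.ofReal) = (NormedSpace.exp M).map Complex.ofReal :=
  exp_map_ofReal k M

/-- The canonical symplectic matrix `J = [[0, 1], [-1, 0]]` on `ℝ^(m+m)`. -/
noncomputable def canonicalJ (m : ℕ) : Matrix (Fin (m + m)) (Fin (m + m)) ℝ :=
  (Matrix.fromBlocks 0 1 (-1) 0).submatrix finSumFinEquiv.symm finSumFinEquiv.symm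

/-- Proposition 1 of the paper, linear/matrix form, symplecticity part:
the real part of a left-right palindromic composition of order `2n` of a
time-symmetric second-order real symplectic basic method is pseudo-symplectic
of order `4n+1`. -/
theorem palindromic_real_part_pseudo_symplectic
    (m s n : ℕ) (hn : 2 ≤ n)
    (A : Matrix (Fin (m + m)) (Fin (m + m)) ℝ)
    (S : ℂ → Matrix (Fin (m + m)) (Fin (m + m)) ℂ)
    -- `S` is analytic
    (hAnal : ∀ z : ℂ, AnalyticAt ℂ S z)
    -- `S` is time-symmetric
    (hTS : ∀ z : ℂ, S z * S (-z) = 1)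
    -- `S` is real
    (hReal : ∀ z : ℂ, (S z).map (starRingEnd ℂ) = S (starRingEnd ℂ z))
    -- `S` is a second-order approximation of `exp (h A)`
    (hOrd2 : (fun h : ℝ => S (h : ℂ) - NormedSpace.exp ((h : ℂ) • A.map Complex.ofReal))
      =O[nhds 0] fun h : ℝ => h ^ 3)
    -- `S` is symplectic
    (hSymp : ∀ z : ℂ, (S z)ᵀ * (canonicalJ m).map Complex.ofReal * S z
      = (canonicalJ m).map Complex.ofReal)
    -- left-right palindromic coefficients with `∑ α_j = 1`
    (α : Fin s → ℂ)
    (hpal : ∀ j : Fin s, α (Fin.rev j) = α j)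
    (hsum : ∑ j, α j = 1)
    -- the composition `P h = S (α_s h) ⋯ S (α_1 h)`
    (P : ℝ → Matrix (Fin (m + m)) (Fin (m + m)) ℂ)
    (hP : ∀ h : ℝ, P h = ((List.ofFn fun j : Fin s => S (α j * (h : ℂ))).reverse).prod)
    -- ... is of order `2n`
    (hPord : (fun h : ℝ => P h - NormedSpace.exp ((h : ℂ) • A.map Complex.ofReal))
      =O[nhds 0] fun h : ℝ => h ^ (2 * n + 1))
    -- `R h` is the entrywise real part of `P h`
    (R : ℝ → Matrix (Fin (m + m)) (Fin (m + m)) ℝ)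
    (hR : ∀ h : ℝ, R h = (P h).map Complex.re) :
    (fun h : ℝ => (R h)ᵀ * canonicalJ m * R h - canonicalJ m)
      =O[nhds 0] fun h : ℝ => h ^ (4 * n + 2) := by
  set Jr := canonicalJ m with hJrdef
  set Jc : Matrix (Fin (m + m)) (Fin (m + m)) ℂ := (canonicalJ m).map Complex.ofReal with hJcdef
  clear_value Jr Jc
  -- exact symplecticity of `P`
  have hPsymp : ∀ h : ℝ, (P h)ᵀ * Jc * P h = Jc := by
    intro h
    rw [hP h]
    refine list_prod_symplectic Jc _ fun M hM => ?_
    rw [List.mem_reverse, List.mem_ofFn] at hM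
    obtain ⟨j, rfl⟩ := hM
    exact hSymp _
  -- the exponential has real entries
  have hexpIm : ∀ (h : ℝ) i j, (NormedSpace.exp ((h : ℂ) • A.map Complex.ofReal) i j).im = 0 := by
    intro h i j
    have h1 : (h : ℂ) • A.map Complex.ofReal = (h • A).map Complex.ofReal := by
      ext i j
      simp [Matrix.map_apply, Complex.ofReal_mul]
    rw [h1, exp_map_ofReal']
    simp [Matrix.map_apply]
  -- `E` is the entrywise imaginary part of `P` (times `I`)
  set E : ℝ → Matrix (Fin (m + m)) (Fin (m + m)) ℂ :=
    fun h => P h - (R h).map Complex.ofReal with hEdef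
  have hEentry : ∀ (h : ℝ) i j, E h i j = P h i j - ((P h i j).re : ℂ) := by
    intro h i j
    simp [hEdef, hR h, Matrix.sub_apply, Matrix.map_apply]
  have hEre : ∀ (h : ℝ) i j, (E h i j).re = 0 := by
    intro h i j; rw [hEentry]; simp
  clear_value E
  have hEnorm : ∀ h : ℝ, ‖E h‖ ≤ ‖P h - NormedSpace.exp ((h : ℂ) • A.map Complex.ofReal)‖ := by
    intro h
    refine (Matrix.norm_le_iff (norm_nonneg _)).2 fun i j => ?_
    have him : (P h i j).im = ((P h - NormedSpace.exp ((h : ℂ) • A.map Complex.ofReal)) i j).im := by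
      rw [Matrix.sub_apply, Complex.sub_im, hexpIm h i j, sub_zero]
    have hnE : ‖E h i j‖ = |(P h i j).im| := by
      rw [hEentry]
      have hh : P h i j - ((P h i j).re : ℂ) = ((P h i j).im : ℂ) * Complex.I := by
        apply Complex.ext <;> simp
      rw [hh]
      simp
    rw [hnE, him]
    calc |((P h - NormedSpace.exp ((h : ℂ) • A.map Complex.ofReal)) i j).im|
        ≤ ‖(P h - NormedSpace.exp ((h : ℂ) • A.map Complex.ofReal)) i j‖ := Complex.abs_im_le_norm _
      _ ≤ ‖P h - NormedSpace.exp ((h : ℂ) • A.map Complex.ofReal)‖ :=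
          Matrix.norm_entry_le_entrywise_sup_norm _
  have hEbig : (fun h : ℝ => E h) =O[nhds 0] fun h : ℝ => h ^ (2 * n + 1) :=
    (Asymptotics.isBigO_of_le _ hEnorm).trans hPord
  -- the key algebraic identity
  have hkey : ∀ h : ℝ, ((R h)ᵀ * Jr * R h - Jr).map Complex.ofReal
      = -(((R h)ᵀ * Jr).map Complex.ofReal * E h)
        - (E h)ᵀ * ((Jr * R h).map Complex.ofReal)
        - (E h)ᵀ * Jc * E h := by
    intro h
    set X : Matrix (Fin (m + m)) (Fin (m + m)) ℂ := (R h).map Complex.ofReal with hXdef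
    have hEh : E h = P h - X := by rw [hEdef, hXdef]
    clear_value X
    have hPX : P h = X + E h := by rw [hEh]; abel
    have hY : ((R h)ᵀ * Jr).map Complex.ofReal = Xᵀ * Jc := by
      rw [hXdef, hJcdef, hJrdef, map_ofReal_mul, Matrix.transpose_map]
    have hW : (Jr * R h).map Complex.ofReal = Jc * X := by
      rw [hXdef, hJcdef, hJrdef]; exact map_ofReal_mul _ _
    have hmap : ((R h)ᵀ * Jr * R h - Jr).map Complex.ofReal = Xᵀ * Jc * X - Jc := by
      have hsub : ((R h)ᵀ * Jr * R h - Jr).map Complex.ofReal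
          = ((R h)ᵀ * Jr * R h).map Complex.ofReal - Jr.map Complex.ofReal := by
        ext i j; simp [Matrix.map_apply, Matrix.sub_apply]
      rw [hsub, map_ofReal_mul, hY, hXdef, hJcdef, hJrdef]
    have expand : (X + E h)ᵀ * Jc * (X + E h)
        = Xᵀ * Jc * X + (Xᵀ * Jc * E h + ((E h)ᵀ * Jc * X + (E h)ᵀ * Jc * E h)) := by
      rw [transpose_add]; noncomm_ring
    have hs := hPsymp h
    rw [hPX, expand] at hs
    rw [hmap, hY, hW, ← Matrix.mul_assoc]
    calc Xᵀ * Jc * X - Jc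
        = Xᵀ * Jc * X
          - (Xᵀ * Jc * X + (Xᵀ * Jc * E h + ((E h)ᵀ * Jc * X + (E h)ᵀ * Jc * E h))) :=
          congrArg (fun Z => Xᵀ * Jc * X - Z) hs.symm
      _ = -(Xᵀ * Jc * E h) - (E h)ᵀ * Jc * X - (E h)ᵀ * Jc * E h := by abel
  -- entrywise: the real parts of the cross terms vanish
  have hnormle : ∀ h : ℝ, ‖(R h)ᵀ * Jr * R h - Jr‖ ≤ ‖(E h)ᵀ * Jc * E h‖ := by
    intro h
    refine (Matrix.norm_le_iff (norm_nonneg _)).2 fun i j => ?_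
    have hij : (((R h)ᵀ * Jr * R h - Jr).map Complex.ofReal) i j
        = (-(((R h)ᵀ * Jr).map Complex.ofReal * E h)
            - (E h)ᵀ * ((Jr * R h).map Complex.ofReal)
            - (E h)ᵀ * Jc * E h) i j := by rw [hkey h]
    have h2 := congrArg Complex.re hij
    have z1 : ((((R h)ᵀ * Jr).map Complex.ofReal * E h) i j).re = 0 := by
      rw [Matrix.mul_apply, Complex.re_sum]
      refine Finset.sum_eq_zero fun t _ => ?_
      simp [Matrix.map_apply, Complex.mul_re, hEre]
    have z2 : (((E h)ᵀ * ((Jr * R h).map Complex.ofReal)) i j).re = 0 := by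
      rw [Matrix.mul_apply, Complex.re_sum]
      refine Finset.sum_eq_zero fun t _ => ?_
      simp [Matrix.map_apply, Matrix.transpose_apply, Complex.mul_re, hEre]
    simp only [Matrix.map_apply, Complex.ofReal_re, Matrix.sub_apply, Matrix.neg_apply,
      Complex.sub_re, Complex.neg_re, z1, z2, neg_zero, zero_sub] at h2
    rw [Real.norm_eq_abs, Matrix.sub_apply, h2, abs_neg]
    calc |(((E h)ᵀ * Jc * E h) i j).re| ≤ ‖((E h)ᵀ * Jc * E h) i j‖ := Complex.abs_re_le_norm _
      _ ≤ ‖(E h)ᵀ * Jc * E h‖ := Matrix.norm_entry_le_entrywise_sup_norm _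
  -- assemble the asymptotics
  have step1 : (fun h : ℝ => (R h)ᵀ * Jr * R h - Jr)
      =O[nhds 0] fun h : ℝ => (E h)ᵀ * Jc * E h := by
    refine Asymptotics.isBigO_of_le _ fun h => ?_
    exact hnormle h
  have step2 : (fun h : ℝ => (E h)ᵀ * Jc * E h)
      =O[nhds 0] fun h : ℝ => ‖E h‖ * ‖E h‖ := by
    refine IsBigO.of_bound ((↑(m + m) : ℝ) ^ 2 * ‖Jc‖) (Eventually.of_forall fun h => ?_)
    have h1 := matrix_norm_mul_le ((E h)ᵀ * Jc) (E h)
    have h2 := matrix_norm_mul_le ((E h)ᵀ) Jc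
    have h3 := matrix_norm_transpose_le (E h)
    have hk : (0 : ℝ) ≤ (↑(m + m) : ℝ) := Nat.cast_nonneg _
    rw [Real.norm_of_nonneg (by positivity)]
    calc ‖(E h)ᵀ * Jc * E h‖ ≤ (↑(m + m) : ℝ) * ‖(E h)ᵀ * Jc‖ * ‖E h‖ := h1
      _ ≤ (↑(m + m) : ℝ) * ((↑(m + m) : ℝ) * ‖(E h)ᵀ‖ * ‖Jc‖) * ‖E h‖ := by gcongr
      _ ≤ (↑(m + m) : ℝ) * ((↑(m + m) : ℝ) * ‖E h‖ * ‖Jc‖) * ‖E h‖ := by gcongr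
      _ = (↑(m + m) : ℝ) ^ 2 * ‖Jc‖ * (‖E h‖ * ‖E h‖) := by ring
  have step3 : (fun h : ℝ => ‖E h‖ * ‖E h‖)
      =O[nhds 0] fun h : ℝ => h ^ (2 * n + 1) * h ^ (2 * n + 1) :=
    hEbig.norm_left.mul hEbig.norm_left
  have hpow : (fun h : ℝ => h ^ (2 * n + 1) * h ^ (2 * n + 1))
      = fun h : ℝ => h ^ (4 * n + 2) := by
    funext h; rw [← pow_add]; congr 1; omega
  rw [← hpow]
  exact (step1.trans step2).trans step3
end

section
/- Fix d ≥ 1, a real matrix A, and a time-symmetric second-order real basic method S for A. Let n ≥ 2 and let α_1, …, α_s ∈ ℂ be symmetric-conjugate, i.e. α_{s+1−j} = conj(α_j) for all j, and suppose the composition P(h) = S(α_s h)·S(α_{s−1} h)⋯S(α_1 h) is of odd order 2n−1, i.e. (fun h : ℝ => P(h) − exp(h·A)) is O(h^{2n}) as h → 0. Let R(h) be the entrywise real part of P(h). Then (fun h : ℝ => R(h) − exp(h·A)) is O(h^{2n+1}) as h → 0 (R is of order 2n), and R is pseudo-symmetric of order 4n−1, i.e. (fun h : ℝ => R(−h)·R(h)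 − 1) is O(h^{4n}) as h → 0. -/
open Matrix Asymptotics Filter NormedSpace

namespace SCAux

theorem prod_rev_mul_prod_rev {M : Type*} [Monoid M] :
    ∀ {s : ℕ} (f g : Fin s → M), (∀ j, f j * g (Fin.rev j) = 1) →
      ((List.ofFn f).reverse).prod * ((List.ofFn g).reverse).prod = 1 := by
  intro s
  induction s with
  | zero => intro f g _; simp
  | succ s ih =>
    intro f g hfg
    rw [List.ofFn_succ' f, List.ofFn_succ (f := g)]
    simp only [List.concat_eq_append, List.reverse_append, List.reverse_cons,
      List.reverse_nil, List.nil_append, List.singleton_append, List.prod_cons,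
      List.prod_append, List.prod_nil, mul_one]
    have hih := ih (fun i => f i.castSucc) (fun i => g i.succ) (fun j => by
      have := hfg j.castSucc
      rwa [Fin.rev_castSucc] at this)
    calc f (Fin.last s) * ((List.ofFn fun i => f i.castSucc).reverse).prod *
          (((List.ofFn fun i => g i.succ).reverse).prod * g 0)
        = f (Fin.last s) * ((((List.ofFn fun i => f i.castSucc).reverse).prod *
            ((List.ofFn fun i => g i.succ).reverse).prod) * g 0) := by
          simp only [mul_assoc]
      _ = f (Fin.last s) * g 0 := by rw [hih, one_mul]
      _ = 1 := by have := hfg (Fin.last s); rwa [Fin.rev_last] at this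

variable {d : ℕ}

theorem exp_mul_exp_neg (M : Matrix (Fin d) (Fin d) ℂ) : exp M * exp (-M) = 1 := by
  rw [← Matrix.exp_add_of_commute M (-M) (Commute.refl M).neg_right, add_neg_cancel, exp_zero]

theorem exp_map_ofReal (M : Matrix (Fin d) (Fin d) ℝ) :
    (exp M).map Complex.ofReal = exp (M.map Complex.ofReal) := by
  letI : SeminormedRing (Matrix (Fin d) (Fin d) ℝ) := Matrix.linftyOpSemiNormedRing
  letI : NormedRing (Matrix (Fin d) (Fin d) ℝ) := Matrix.linftyOpNormedRing
  letI : NormedAlgebra ℝ (Matrix (Fin d) (Fin d) ℝ) := Matrix.linftyOpNormedAlgebra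
  letI : SeminormedRing (Matrix (Fin d) (Fin d) ℂ) := Matrix.linftyOpSemiNormedRing
  letI : NormedRing (Matrix (Fin d) (Fin d) ℂ) := Matrix.linftyOpNormedRing
  letI : NormedAlgebra ℝ (Matrix (Fin d) (Fin d) ℂ) := Matrix.linftyOpNormedAlgebra
  letI : NormedAlgebra ℂ (Matrix (Fin d) (Fin d) ℂ) := Matrix.linftyOpNormedAlgebra
  letI : NormedAlgebra ℚ (Matrix (Fin d) (Fin d) ℝ) := Matrix.linftyOpNormedAlgebra
  letI : NormedAlgebra ℚ (Matrix (Fin d) (Fin d) ℂ) := Matrix.linftyOpNormedAlgebra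
  have hcont : Continuous fun N : Matrix (Fin d) (Fin d) ℝ => N.map Complex.ofReal := by
    exact continuous_matrix fun i j => Complex.continuous_ofReal.comp ((continuous_apply j).comp (continuous_apply i))
  have h1 : (exp M).map Complex.ofReal = exp (M.map Complex.ofReal) := by
    exact map_exp (Complex.ofRealHom.mapMatrix :
      Matrix (Fin d) (Fin d) ℝ →+* Matrix (Fin d) (Fin d) ℂ) hcont M
  rw [h1]

theorem exp_entry_analytic (B : Matrix (Fin d) (Fin d) ℂ) (i j : Fin d) :
    AnalyticAt ℝ (fun t : ℝ => exp ((t : ℂ) • B) i j) 0 := by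
  letI : SeminormedRing (Matrix (Fin d) (Fin d) ℂ) := Matrix.linftyOpSemiNormedRing
  letI : NormedRing (Matrix (Fin d) (Fin d) ℂ) := Matrix.linftyOpNormedRing
  letI : NormedAlgebra ℝ (Matrix (Fin d) (Fin d) ℂ) := Matrix.linftyOpNormedAlgebra
  letI : NormedAlgebra ℂ (Matrix (Fin d) (Fin d) ℂ) := Matrix.linftyOpNormedAlgebra
  have hexp : AnalyticAt ℂ exp (((0 : ℝ) : ℂ) • B) := NormedSpace.exp_analytic (𝕂 := ℂ) _
  have hlin : AnalyticAt ℝ (fun t : ℝ => (t : ℂ) • B) 0 :=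
    (Complex.ofRealCLM.smulRight B).analyticAt 0
  have hcomp : AnalyticAt ℝ (fun t : ℝ => exp ((t : ℂ) • B)) 0 :=
    AnalyticAt.comp (𝕜 := ℝ) (g := exp) (f := fun t : ℝ => (t : ℂ) • B) (x := 0)
      hexp.restrictScalars hlin
  let lm : Matrix (Fin d) (Fin d) ℂ →ₗ[ℝ] ℂ :=
    { toFun := fun N => N i j, map_add' := fun _ _ => rfl, map_smul' := fun _ _ => rfl }
  have hproj := (LinearMap.toContinuousLinearMap lm).analyticAt (exp (((0 : ℝ) : ℂ) • B))
  exact AnalyticAt.comp (𝕜 := ℝ) (g := fun N => LinearMap.toContinuousLinearMap lm N)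
    (f := fun t : ℝ => exp ((t : ℂ) • B)) (x := 0) hproj hcomp

end SCAux

attribute [local instance] Matrix.normedAddCommGroup Matrix.normedSpace

namespace SCAux2

variable {d : ℕ}

theorem isBigO_entry {α : Type*} {l : Filter α} {β : Type*} [NormedAddCommGroup β]
    {f : α → Matrix (Fin d) (Fin d) β} {u : α → ℝ} (hf : f =O[l] u) (i j : Fin d) :
    (fun t => f t i j) =O[l] u :=
  (isBigO_of_le l fun t => (Matrix.norm_entry_le_entrywise_sup_norm (f t) : _)).trans hf

theorem isBigO_matrix {α : Type*} {l : Filter α} {β : Type*} [NormedAddCommGroup β]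
    {f : α → Matrix (Fin d) (Fin d) β} {u : α → ℝ}
    (hf : ∀ i j, (fun t => f t i j) =O[l] u) : f =O[l] u := by
  rw [isBigO_iff]
  choose C hC using fun i j => (hf i j).bound
  refine ⟨∑ i' : Fin d, ∑ j' : Fin d, |C i' j'|, ?_⟩
  have hev : ∀ᶠ t in l, ∀ i j, ‖f t i j‖ ≤ C i j * ‖u t‖ := by
    rw [eventually_all]
    intro i
    rw [eventually_all]
    exact fun j => hC i j
  filter_upwards [hev] with t ht
  rw [Matrix.norm_le_iff (by positivity)]
  intro i j
  have h1 : C i j ≤ ∑ i' : Fin d, ∑ j' : Fin d, |C i' j'| := by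
    calc C i j ≤ |C i j| := le_abs_self _
      _ ≤ ∑ j' : Fin d, |C i j'| :=
        Finset.single_le_sum (f := fun j' => |C i j'|) (fun _ _ => abs_nonneg _) (Finset.mem_univ j)
      _ ≤ ∑ i' : Fin d, ∑ j' : Fin d, |C i' j'| :=
        Finset.single_le_sum (f := fun i' => ∑ j' : Fin d, |C i' j'|) (fun _ _ => Finset.sum_nonneg fun _ _ => abs_nonneg _)
          (Finset.mem_univ i)
  exact (ht i j).trans (mul_le_mul_of_nonneg_right h1 (norm_nonneg _))

theorem isBigO_matmul {α : Type*} {l : Filter α}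
    {f g : α → Matrix (Fin d) (Fin d) ℂ} {u v : α → ℝ}
    (hf : f =O[l] u) (hg : g =O[l] v) :
    (fun t => f t * g t) =O[l] fun t => u t * v t := by
  apply isBigO_matrix
  intro i j
  have h : (fun t => (f t * g t) i j) = fun t => ∑ k : Fin d, f t i k * g t k j := by
    funext t; exact Matrix.mul_apply
  rw [h]
  exact IsBigO.fun_sum fun k _ => (isBigO_entry hf i k).mul (isBigO_entry hg k j)

theorem isBigO_neg_comp {E : Type*} [NormedAddCommGroup E] {f : ℝ → E} {u : ℝ → ℝ}
    (hu : ∀ x : ℝ, ‖u (-x)‖ ≤ ‖u x‖) (hf : f =O[nhds 0] u) :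
    (fun t : ℝ => f (-t)) =O[nhds 0] u := by
  have hneg : Tendsto (fun t : ℝ => -t) (nhds 0) (nhds (0 : ℝ)) := by
    simpa using (continuous_neg.tendsto (0 : ℝ))
  exact (hf.comp_tendsto hneg).trans (isBigO_of_le _ hu)

theorem pow_isBigO_pow {a b : ℕ} (h : a ≤ b) :
    (fun t : ℝ => t ^ b) =O[nhds 0] fun t => t ^ a := by
  rw [isBigO_iff]
  refine ⟨1, ?_⟩
  filter_upwards [Metric.ball_mem_nhds (0 : ℝ) one_pos] with t ht
  have h1 : |t| ≤ 1 := le_of_lt (by simpa [Real.dist_eq] using ht)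
  rw [one_mul, Real.norm_eq_abs, Real.norm_eq_abs, abs_pow, abs_pow]
  exact pow_le_pow_of_le_one (abs_nonneg t) h1 h

theorem odd_part_bound {f : ℝ → ℂ} {k : ℕ} (hk : Even k) (hf : AnalyticAt ℝ f 0)
    (hO : f =O[nhds 0] fun t => t ^ k) :
    (fun t : ℝ => f t - f (-t)) =O[nhds 0] fun t => t ^ (k + 1) := by
  obtain ⟨p, hp⟩ := hf
  have hnorm : ∀ m : ℕ, (fun y : ℝ => ‖y‖ ^ m) =O[nhds (0:ℝ)] fun t => t ^ m :=
    fun m => isBigO_of_le _ fun y => by simp [abs_pow]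
  have hcoeff : ∀ m, m < k → p.coeff m = 0 := by
    intro m
    induction m using Nat.strong_induction_on with
    | _ m ih =>
      intro hmk
      have hps : ∀ t : ℝ, p.partialSum (m + 1) t = t ^ m • p.coeff m := by
        intro t
        rw [FormalMultilinearSeries.partialSum, Finset.sum_range_succ]
        have : ∀ l ∈ Finset.range m, (p l fun _ => t) = 0 := by
          intro l hl
          rw [p.apply_eq_pow_smul_coeff, ih l (Finset.mem_range.1 hl) ((Finset.mem_range.1 hl).trans hmk), smul_zero]
        rw [Finset.sum_eq_zero this, zero_add, p.apply_eq_pow_smul_coeff]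
      have h1 : (fun t : ℝ => f (0 + t)) =O[nhds 0] fun t => t ^ (m + 1) := by
        simpa using hO.trans (pow_isBigO_pow hmk)
      have h2 : (fun t : ℝ => f (0 + t) - p.partialSum (m + 1) t) =O[nhds 0]
          fun t => t ^ (m + 1) := (hp.isBigO_sub_partialSum_pow (m + 1)).trans (hnorm (m + 1))
      have h4 : (fun t : ℝ => t ^ m • p.coeff m) =O[nhds 0] fun t => t ^ (m + 1) := by
        have h3 := h1.sub h2
        refine h3.congr_left fun t => ?_
        rw [hps t]; ring
      obtain ⟨Cb, hCb⟩ := h4.bound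
      have hev : ∀ᶠ t in nhdsWithin (0 : ℝ) {(0:ℝ)}ᶜ, ‖p.coeff m‖ ≤ Cb * |t| := by
        filter_upwards [self_mem_nhdsWithin, hCb.filter_mono nhdsWithin_le_nhds] with t ht h't
        have htne : t ≠ 0 := ht
        have htm : (0 : ℝ) < |t| ^ m := pow_pos (abs_pos.2 htne) m
        rw [norm_smul, norm_pow, Real.norm_eq_abs, Real.norm_eq_abs, abs_pow] at h't
        have h'' : |t| ^ m * ‖p.coeff m‖ ≤ |t| ^ m * (Cb * |t|) := by
          calc |t| ^ m * ‖p.coeff m‖ ≤ Cb * |t| ^ (m + 1) := h't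
            _ = |t| ^ m * (Cb * |t|) := by ring
        exact le_of_mul_le_mul_left h'' htm
      have hlim : Tendsto (fun t : ℝ => Cb * |t|) (nhdsWithin (0 : ℝ) {(0:ℝ)}ᶜ) (nhds 0) := by
        have : Tendsto (fun t : ℝ => Cb * |t|) (nhds 0) (nhds (Cb * |(0:ℝ)|)) :=
          ((continuous_abs.tendsto (0 : ℝ)).const_mul Cb)
        simpa using this.mono_left nhdsWithin_le_nhds
      have hle : ‖p.coeff m‖ ≤ 0 := ge_of_tendsto hlim hev
      simpa using le_antisymm hle (norm_nonneg _)
  have hps : ∀ t : ℝ, p.partialSum (k + 1) t = t ^ k • p.coeff k := by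
    intro t
    rw [FormalMultilinearSeries.partialSum, Finset.sum_range_succ]
    have : ∀ l ∈ Finset.range k, (p l fun _ => t) = 0 := by
      intro l hl
      rw [p.apply_eq_pow_smul_coeff, hcoeff l (Finset.mem_range.1 hl), smul_zero]
    rw [Finset.sum_eq_zero this, zero_add, p.apply_eq_pow_smul_coeff]
  have hg : (fun t : ℝ => f t - t ^ k • p.coeff k) =O[nhds 0] fun t => t ^ (k + 1) := by
    have := (hp.isBigO_sub_partialSum_pow (k + 1)).trans (hnorm (k + 1))
    refine this.congr_left fun t => ?_
    rw [hps t, zero_add]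
  have hgneg : (fun t : ℝ => f (-t) - (-t) ^ k • p.coeff k) =O[nhds 0]
      fun t => t ^ (k + 1) :=
    isBigO_neg_comp (fun x => by simp [abs_pow]) hg
  have heq : (fun t : ℝ => f t - f (-t))
      = fun t => (f t - t ^ k • p.coeff k) - (f (-t) - (-t) ^ k • p.coeff k) := by
    funext t
    rw [hk.neg_pow t]
    ring
  rw [heq]
  exact hg.sub hgneg

theorem entry_prod_analytic {ι : Type*} (F : ι → ℝ → Matrix (Fin d) (Fin d) ℂ)
    (hF : ∀ k i j, AnalyticAt ℝ (fun t => F k t i j) 0) :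
    ∀ (L : List ι) (i j : Fin d),
      AnalyticAt ℝ (fun t => (L.map fun k => F k t).prod i j) 0 := by
  intro L
  induction L with
  | nil =>
    intro i j
    simp only [List.map_nil, List.prod_nil]
    exact analyticAt_const
  | cons a L ih =>
    intro i j
    have h : (fun t => ((a :: L).map fun k => F k t).prod i j)
        = fun t => ∑ k : Fin d, F a t i k * ((L.map fun k => F k t).prod k j) := by
      funext t
      simp [List.map_cons, List.prod_cons, Matrix.mul_apply]
    rw [h]
    exact Finset.analyticAt_fun_sum _ fun k _ => (hF a i k).mul (ih k j)

theorem real_norm_le_map (M : Matrix (Fin d) (Fin d) ℝ) :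
    ‖M‖ ≤ ‖M.map Complex.ofReal‖ := by
  rw [Matrix.norm_le_iff (norm_nonneg _)]
  intro i j
  have h : ‖M i j‖ = ‖(M.map Complex.ofReal) i j‖ := by
    simp [Matrix.map_apply]
  rw [h]
  exact Matrix.norm_entry_le_entrywise_sup_norm _

end SCAux2


/-- Proposition 2(a) of the paper, linear/matrix form:
the real part of a symmetric-conjugate composition of odd order `2n-1` of a
time-symmetric second-order real basic method is of order `2n` and is
pseudo-symmetric of order `4n-1`. -/
theorem symmetric_conjugate_odd_order_real_part
    (d s n : ℕ) (hd : 1 ≤ d) (hn : 2 ≤ n)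
    (A : Matrix (Fin d) (Fin d) ℝ)
    (S : ℂ → Matrix (Fin d) (Fin d) ℂ)
    -- `S` is analytic
    (hAnal : ∀ z : ℂ, AnalyticAt ℂ S z)
    -- `S` is time-symmetric
    (hTS : ∀ z : ℂ, S z * S (-z) = 1)
    -- `S` is real: the entrywise conjugate of `S z` is `S z̄`
    (hReal : ∀ z : ℂ, (S z).map (starRingEnd ℂ) = S (starRingEnd ℂ z))
    -- `S` is a second-order approximation of `exp (h A)`
    (hOrd2 : (fun h : ℝ => S (h : ℂ) - exp ((h : ℂ) • A.map Complex.ofReal))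
      =O[nhds 0] fun h : ℝ => h ^ 3)
    -- symmetric-conjugate coefficients
    (α : Fin s → ℂ)
    (hSC : ∀ j : Fin s, α (Fin.rev j) = starRingEnd ℂ (α j))
    -- the composition `P h = S (α_s h) ⋯ S (α_1 h)`
    (P : ℝ → Matrix (Fin d) (Fin d) ℂ)
    (hP : ∀ h : ℝ, P h = ((List.ofFn fun j : Fin s => S (α j * (h : ℂ))).reverse).prod)
    -- ... is of odd order `2n-1`
    (hPord : (fun h : ℝ => P h - exp ((h : ℂ) • A.map Complex.ofReal))
      =O[nhds 0] fun h : ℝ => h ^ (2 * n))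
    -- `R h` is the entrywise real part of `P h`
    (R : ℝ → Matrix (Fin d) (Fin d) ℝ)
    (hR : ∀ h : ℝ, R h = (P h).map Complex.re) :
    ((fun h : ℝ => R h - exp (h • A)) =O[nhds 0] fun h : ℝ => h ^ (2 * n + 1)) ∧
      ((fun h : ℝ => R (-h) * R h - 1) =O[nhds 0] fun h : ℝ => h ^ (4 * n)) := by
  classical
  obtain ⟨E, hE⟩ : ∃ E : ℝ → Matrix (Fin d) (Fin d) ℂ,
      ∀ t : ℝ, E t = exp ((t : ℂ) • A.map Complex.ofReal) := ⟨_, fun _ => rfl⟩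
  obtain ⟨Q, hQdef⟩ : ∃ Q : ℝ → Matrix (Fin d) (Fin d) ℂ,
      ∀ t : ℝ, Q t = (P t).map (starRingEnd ℂ) := ⟨_, fun _ => rfl⟩
  simp only [← hE] at hPord
  -- ### basic algebraic identities
  have hQP : ∀ t : ℝ, Q (-t) * P t = 1 := by
    intro t
    have hQrw : Q (-t) = ((List.ofFn fun j : Fin s =>
        S (α (Fin.rev j) * ((-t : ℝ) : ℂ))).reverse).prod := by
      have h0 := map_list_prod ((starRingEnd ℂ).mapMatrix :
          Matrix (Fin d) (Fin d) ℂ →+* Matrix (Fin d) (Fin d) ℂ)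
        ((List.ofFn fun j : Fin s => S (α j * ((-t : ℝ) : ℂ))).reverse)
      rw [hQdef, hP]
      rw [show (((List.ofFn fun j : Fin s => S (α j * ((-t : ℝ) : ℂ))).reverse).prod).map
            (starRingEnd ℂ)
          = ((starRingEnd ℂ).mapMatrix)
            (((List.ofFn fun j : Fin s => S (α j * ((-t : ℝ) : ℂ))).reverse).prod) from rfl,
        h0]
      congr 1
      rw [List.map_reverse]
      congr 1
      rw [List.map_ofFn]
      congr 1
      funext j
      simp only [Function.comp, RingHom.mapMatrix_apply]
      rw [hReal, _root_.map_mul, Complex.conj_ofReal, ← hSC j]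
    have hside : ∀ j : Fin s,
        S (α (Fin.rev j) * ((-t : ℝ) : ℂ)) * S (α (Fin.rev j) * (t : ℂ)) = 1 := by
      intro j
      have hz := hTS (-(α (Fin.rev j) * (t : ℂ)))
      rw [neg_neg] at hz
      rw [show α (Fin.rev j) * ((-t : ℝ) : ℂ) = -(α (Fin.rev j) * (t : ℂ)) by push_cast; ring]
      exact hz
    have hmain := SCAux.prod_rev_mul_prod_rev
      (fun j : Fin s => S (α (Fin.rev j) * ((-t : ℝ) : ℂ)))
      (fun j : Fin s => S (α j * (t : ℂ))) hside
    rw [hQrw, hP t]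
    simpa using hmain
  have hPQ : ∀ t : ℝ, P t * Q (-t) = 1 := fun t => mul_eq_one_comm.mp (hQP t)
  have hQP' : ∀ t : ℝ, Q t * P (-t) = 1 := fun t => by simpa using hQP (-t)
  have hPQ' : ∀ t : ℝ, P (-t) * Q t = 1 := fun t => mul_eq_one_comm.mp (hQP' t)
  have hEE : ∀ t : ℝ, E (-t) * E t = 1 := by
    intro t
    rw [hE, hE]
    rw [show (((-t) : ℝ) : ℂ) • A.map Complex.ofReal = -((t : ℂ) • A.map Complex.ofReal) by
      push_cast; rw [neg_smul]]
    have h := SCAux.exp_mul_exp_neg (-((t : ℂ) • A.map Complex.ofReal))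
    rwa [neg_neg] at h
  -- ### analyticity of the entries
  have entryAnalytic : ∀ (i j : Fin d) (z : ℂ), AnalyticAt ℂ (fun w => S w i j) z := by
    intro i j z
    let lm : Matrix (Fin d) (Fin d) ℂ →ₗ[ℂ] ℂ :=
      { toFun := fun N => N i j, map_add' := fun _ _ => rfl, map_smul' := fun _ _ => rfl }
    exact AnalyticAt.comp (𝕜 := ℂ) (g := fun N => LinearMap.toContinuousLinearMap lm N)
      (f := S) (x := z) ((LinearMap.toContinuousLinearMap lm).analyticAt (S z)) (hAnal z)
  have hFana : ∀ (k : Fin s) (i j : Fin d),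
      AnalyticAt ℝ (fun u : ℝ => S (α k * (u : ℂ)) i j) 0 := by
    intro k i j
    have hcoe : AnalyticAt ℝ (fun u : ℝ => (u : ℂ)) 0 := by
      have h := Complex.ofRealCLM.analyticAt (0 : ℝ)
      exact h.congr (Filter.Eventually.of_forall fun u => rfl)
    have hmul : AnalyticAt ℝ (fun u : ℝ => α k * (u : ℂ)) 0 :=
      AnalyticAt.mul analyticAt_const hcoe
    exact AnalyticAt.comp (𝕜 := ℝ) (g := fun w => S w i j)
      (f := fun u : ℝ => α k * (u : ℂ)) (x := 0)
      ((entryAnalytic i j (α k * ((0 : ℝ) : ℂ))).restrictScalars) hmul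
  have hPL : ∀ u : ℝ,
      P u = (((List.finRange s).reverse).map fun k => S (α k * (u : ℂ))).prod := by
    intro u
    rw [hP u, List.ofFn_eq_map, ← List.map_reverse]
  have hPana : ∀ i j : Fin d, AnalyticAt ℝ (fun u : ℝ => P u i j) 0 := by
    intro i j
    have h := SCAux2.entry_prod_analytic (F := fun (k : Fin s) (u : ℝ) => S (α k * (u : ℂ)))
      hFana ((List.finRange s).reverse) i j
    have heq : (fun u : ℝ => P u i j)
        = fun u : ℝ => ((((List.finRange s).reverse).map fun k => S (α k * (u : ℂ))).prod) i j := by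
      funext u; rw [hPL u]
    rw [heq]; exact h
  have hEana : ∀ i j : Fin d, AnalyticAt ℝ (fun u : ℝ => E u i j) 0 := by
    intro i j
    have h := SCAux.exp_entry_analytic (A.map Complex.ofReal) i j
    have heq : (fun u : ℝ => E u i j)
        = fun u : ℝ => exp ((u : ℂ) • A.map Complex.ofReal) i j := by
      funext u; rw [hE u]
    rw [heq]; exact h
  -- ### values at 0
  have hE0 : E 0 = 1 := by
    rw [hE]
    rw [show ((0 : ℝ) : ℂ) • A.map Complex.ofReal = 0 by simp]
    exact exp_zero
  have htendpow : ∀ m : ℕ, 0 < m →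
      Tendsto (fun u : ℝ => u ^ m) (nhds 0) (nhds 0) := by
    intro m hm
    have h := (continuous_pow m).tendsto (0 : ℝ)
    simpa [zero_pow hm.ne'] using h
  have hΔent : ∀ i j : Fin d,
      (fun u : ℝ => P u i j - E u i j) =O[nhds 0] fun u => u ^ (2 * n) := by
    intro i j
    refine (SCAux2.isBigO_entry hPord i j).congr_left fun u => ?_
    simp [Matrix.sub_apply]
  have hP0 : P 0 = 1 := by
    ext i j
    have hcont : Tendsto (fun u : ℝ => P u i j - E u i j) (nhds 0)
        (nhds (P 0 i j - E 0 i j)) := ((hPana i j).sub (hEana i j)).continuousAt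
    have h0 : Tendsto (fun u : ℝ => P u i j - E u i j) (nhds 0) (nhds 0) :=
      (hΔent i j).trans_tendsto (htendpow _ (by omega))
    have huniq := tendsto_nhds_unique hcont h0
    have h1 : P 0 i j = E 0 i j := sub_eq_zero.mp huniq
    rw [h1, hE0]
  -- ### boundedness and first-order bounds
  have hPbd : P =O[nhds (0:ℝ)] (fun _ => (1 : ℝ)) :=
    SCAux2.isBigO_matrix fun i j =>
      Filter.Tendsto.isBigO_one ℝ ((hPana i j).continuousAt)
  have hEbd : E =O[nhds (0:ℝ)] (fun _ => (1 : ℝ)) :=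
    SCAux2.isBigO_matrix fun i j =>
      Filter.Tendsto.isBigO_one ℝ ((hEana i j).continuousAt)
  have hQbd : Q =O[nhds (0:ℝ)] (fun _ => (1 : ℝ)) := by
    apply SCAux2.isBigO_matrix
    intro i j
    refine (isBigO_of_le _ fun u => le_of_eq ?_).trans (SCAux2.isBigO_entry hPbd i j)
    rw [hQdef u]
    rw [show ((P u).map (starRingEnd ℂ)) i j = (starRingEnd ℂ) (P u i j) from rfl]
    exact RCLike.norm_conj _
  have hPnegbd : (fun t : ℝ => P (-t)) =O[nhds (0:ℝ)] (fun _ => (1 : ℝ)) :=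
    SCAux2.isBigO_neg_comp (fun _ => le_refl _) hPbd
  have hQnegbd : (fun t : ℝ => Q (-t)) =O[nhds (0:ℝ)] (fun _ => (1 : ℝ)) :=
    SCAux2.isBigO_neg_comp (fun _ => le_refl _) hQbd
  have hEnegbd : (fun t : ℝ => E (-t)) =O[nhds (0:ℝ)] (fun _ => (1 : ℝ)) :=
    SCAux2.isBigO_neg_comp (fun _ => le_refl _) hEbd
  have hΔnegO : (fun t : ℝ => P (-t) - E (-t)) =O[nhds 0] fun t => t ^ (2 * n) :=
    SCAux2.isBigO_neg_comp (fun x => by simp [abs_pow]) hPord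
  have hEid : (fun t : ℝ => 1 - E t) =O[nhds 0] fun t => t := by
    apply SCAux2.isBigO_matrix
    intro i j
    have hdiff := ((hEana i j).differentiableAt).hasFDerivAt.isBigO_sub
    have h2 : (fun u : ℝ => (1 - E u) i j) =O[nhds 0] fun u => u - 0 := by
      refine hdiff.neg_left.congr_left fun u => ?_
      rw [← hE0]
      simp only [Matrix.sub_apply]
      ring
    exact h2.trans (isBigO_of_le _ fun u => le_of_eq (by rw [sub_zero]))
  have hQid : (fun t : ℝ => 1 - Q t) =O[nhds 0] fun t => t := by
    apply SCAux2.isBigO_matrix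
    intro i j
    have hdiff := ((hPana i j).differentiableAt).hasFDerivAt.isBigO_sub
    have h1 : (fun u : ℝ => (1 - Q u) i j) =O[nhds 0] fun u => P u i j - P 0 i j := by
      apply isBigO_of_le
      intro u
      have he : (1 - Q u) i j = (starRingEnd ℂ) (P 0 i j - P u i j) := by
        rw [map_sub]
        rw [show (1 - Q u) i j = (1 : Matrix (Fin d) (Fin d) ℂ) i j - Q u i j from rfl]
        rw [hQdef u]
        rw [show ((P u).map (starRingEnd ℂ)) i j = (starRingEnd ℂ) (P u i j) from rfl]
        congr 1
        rw [hP0]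
        simp [Matrix.one_apply, apply_ite (starRingEnd ℂ)]
      rw [he, RCLike.norm_conj, norm_sub_rev]
    exact h1.trans (hdiff.trans (isBigO_of_le _ fun u => le_of_eq (by rw [sub_zero])))
  -- ### the three error terms
  have hT1 : (fun t : ℝ => (P t - E t) - (P (-t) - E (-t))) =O[nhds 0]
      fun t => t ^ (2 * n + 1) := by
    apply SCAux2.isBigO_matrix
    intro i j
    have hcore := SCAux2.odd_part_bound (f := fun u : ℝ => P u i j - E u i j)
      ⟨n, by ring⟩ ((hPana i j).sub (hEana i j)) (hΔent i j)
    refine hcore.congr_left fun t => ?_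
    simp [Matrix.sub_apply]
  have hT2 : (fun t : ℝ => (P (-t) - E (-t)) * (1 - E t)) =O[nhds 0]
      fun t => t ^ (2 * n + 1) := by
    refine (SCAux2.isBigO_matmul hΔnegO hEid).congr_right fun t => ?_
    rw [← pow_succ]
  have hT3 : (fun t : ℝ => (1 - Q t) * ((P (-t) - E (-t)) * E t)) =O[nhds 0]
      fun t => t ^ (2 * n + 1) := by
    refine (SCAux2.isBigO_matmul hQid (SCAux2.isBigO_matmul hΔnegO hEbd)).congr_right
      fun t => ?_
    rw [mul_one, ← pow_succ']
  -- ### identity for goal 1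
  have hRmap : ∀ t : ℝ, (R t).map Complex.ofReal = (2⁻¹ : ℂ) • (P t + Q t) := by
    intro t
    ext i j
    rw [hR t]
    rw [show ((P t).map Complex.re).map Complex.ofReal i j
        = ((P t i j).re : ℂ) from rfl]
    rw [show ((2⁻¹ : ℂ) • (P t + Q t)) i j = (2⁻¹ : ℂ) * (P t i j + Q t i j) from rfl]
    rw [hQdef t]
    rw [show ((P t).map (starRingEnd ℂ)) i j = (starRingEnd ℂ) (P t i j) from rfl]
    rw [Complex.add_conj]
    push_cast
    ring
  have hQE : ∀ t : ℝ, Q t - E t = -(Q t * (P (-t) - E (-t)) * E t) := by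
    intro t
    have h1 := hQP' t
    have h2 := hEE t
    calc Q t - E t = Q t * (E (-t) * E t) - Q t * P (-t) * E t := by
          rw [h1, h2, mul_one, one_mul]
      _ = -(Q t * (P (-t) - E (-t)) * E t) := by noncomm_ring
  have hI1 : ∀ t : ℝ, (R t).map Complex.ofReal - E t = (2⁻¹ : ℂ) •
      (((P t - E t) - (P (-t) - E (-t))) +
        ((P (-t) - E (-t)) * (1 - E t) + (1 - Q t) * ((P (-t) - E (-t)) * E t))) := by
    intro t
    have hmid : (P t + Q t) - (2 : ℂ) • E t =
        ((P t - E t) - (P (-t) - E (-t))) +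
          ((P (-t) - E (-t)) * (1 - E t) + (1 - Q t) * ((P (-t) - E (-t)) * E t)) := by
      have h2 := hQE t
      have expand : ((P t - E t) - (P (-t) - E (-t))) +
          ((P (-t) - E (-t)) * (1 - E t) + (1 - Q t) * ((P (-t) - E (-t)) * E t))
          = (P t - E t) + -(Q t * (P (-t) - E (-t)) * E t) := by noncomm_ring
      rw [expand, ← h2, two_smul]
      abel
    rw [hRmap t, ← hmid, smul_sub, smul_smul]
    rw [show (2⁻¹ : ℂ) * 2 = 1 by norm_num, one_smul]
  have hG1c : (fun t : ℝ => (R t).map Complex.ofReal - E t) =O[nhds 0]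
      fun t => t ^ (2 * n + 1) := by
    simp only [hI1]
    exact (((hT1.add (hT2.add hT3))).const_smul_left (2⁻¹ : ℂ)).congr_left fun t => rfl
  have hexpmap : ∀ t : ℝ, (exp (t • A)).map Complex.ofReal = E t := by
    intro t
    rw [SCAux.exp_map_ofReal, hE]
    congr 1
    ext i j
    rw [show ((t • A).map Complex.ofReal) i j = ((t * A i j : ℝ) : ℂ) from rfl]
    rw [show (((t : ℂ) • A.map Complex.ofReal)) i j = (t : ℂ) * ((A i j : ℝ) : ℂ) from rfl]
    push_cast
    ring
  -- ### goal 2 identities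
  have hcore2 : ∀ t : ℝ, (P (-t) + Q (-t)) * (P t + Q t) - (4 : ℂ) • 1 =
      Q (-t) * Q t * ((P (-t) * P t - 1) * (P (-t) * P t - 1)) := by
    intro t
    have e1 := hQP t
    have e2 := hPQ' t
    have e4 := hQP' t
    have hL2 : (P (-t) + Q (-t)) * (P t + Q t) - (4 : ℂ) • 1
        = P (-t) * P t + Q (-t) * Q t - (2 : ℂ) • 1 := by
      have hexp : (P (-t) + Q (-t)) * (P t + Q t) - (4 : ℂ) • 1
          = P (-t) * P t + (P (-t) * Q t + (Q (-t) * P t + Q (-t) * Q t)) - (4 : ℂ) • 1 := by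
        noncomm_ring
      rw [hexp, e2, e1]
      module
    have hc1 : Q t * (P (-t) * P t - 1) = P t - Q t := by
      rw [mul_sub, ← mul_assoc, e4, one_mul, mul_one]
    have hc2 : (P t - Q t) * (P (-t) * P t - 1)
        = P t * (P (-t) * P t) - P t - (P t - Q t) := by
      have h := hc1
      have hx : (P t - Q t) * (P (-t) * P t - 1)
          = P t * (P (-t) * P t) - P t - ((Q t * P (-t)) * P t - Q t) := by noncomm_ring
      rw [hx, e4, one_mul]
    have hR2 : Q (-t) * Q t * ((P (-t) * P t - 1) * (P (-t) * P t - 1))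
        = P (-t) * P t + Q (-t) * Q t - (2 : ℂ) • 1 := by
      rw [show Q (-t) * Q t * ((P (-t) * P t - 1) * (P (-t) * P t - 1))
          = Q (-t) * (Q t * (P (-t) * P t - 1) * (P (-t) * P t - 1)) by noncomm_ring]
      rw [hc1, hc2]
      rw [show Q (-t) * (P t * (P (-t) * P t) - P t - (P t - Q t))
          = (Q (-t) * P t) * (P (-t) * P t) - Q (-t) * P t - ((Q (-t) * P t) - Q (-t) * Q t) by
        noncomm_ring]
      rw [e1, one_mul]
      module
    rw [hL2, hR2]
  have hRm2 : ∀ t : ℝ, (R (-t) * R t - 1).map Complex.ofReal =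
      (4⁻¹ : ℂ) • (Q (-t) * Q t * ((P (-t) * P t - 1) * (P (-t) * P t - 1))) := by
    intro t
    have hmap : (R (-t) * R t - 1).map Complex.ofReal =
        ((R (-t)).map Complex.ofReal) * ((R t).map Complex.ofReal) - 1 := by
      calc (R (-t) * R t - 1).map Complex.ofReal
          = (Complex.ofRealHom.mapMatrix (R (-t) * R t - 1) :
              Matrix (Fin d) (Fin d) ℂ) := rfl
        _ = Complex.ofRealHom.mapMatrix (R (-t)) * Complex.ofRealHom.mapMatrix (R t) - 1 := by
            rw [_root_.map_sub, _root_.map_mul, _root_.map_one]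
        _ = ((R (-t)).map Complex.ofReal) * ((R t).map Complex.ofReal) - 1 := rfl
    rw [hmap, hRmap (-t), hRmap t, smul_mul_smul_comm]
    rw [show Q (-t) * Q t * ((P (-t) * P t - 1) * (P (-t) * P t - 1))
        = (P (-t) + Q (-t)) * (P t + Q t) - (4 : ℂ) • 1 from (hcore2 t).symm]
    rw [smul_sub, smul_smul]
    rw [show (2⁻¹ : ℂ) * 2⁻¹ = (4⁻¹ : ℂ) by norm_num,
      show (4⁻¹ : ℂ) * 4 = (1 : ℂ) by norm_num, one_smul]
  have hXO : (fun t : ℝ => P (-t) * P t - 1) =O[nhds 0] fun t => t ^ (2 * n) := by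
    have hid : ∀ t : ℝ, P (-t) * P t - 1 =
        (P (-t) - E (-t)) * P t + E (-t) * (P t - E t) := by
      intro t
      rw [← hEE t]
      noncomm_ring
    simp only [hid]
    exact ((SCAux2.isBigO_matmul hΔnegO hPbd).congr_right fun t => by rw [mul_one]).add
      ((SCAux2.isBigO_matmul hEnegbd hPord).congr_right fun t => by rw [one_mul])
  have hsq : (fun t : ℝ => (P (-t) * P t - 1) * (P (-t) * P t - 1)) =O[nhds 0]
      fun t => t ^ (4 * n) := by
    refine (SCAux2.isBigO_matmul hXO hXO).congr_right fun t => ?_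
    rw [← pow_add]
    congr 1
    ring
  have hG2c : (fun t : ℝ => (R (-t) * R t - 1).map Complex.ofReal) =O[nhds 0]
      fun t => t ^ (4 * n) := by
    simp only [hRm2]
    have hprod : (fun t : ℝ => Q (-t) * Q t * ((P (-t) * P t - 1) * (P (-t) * P t - 1)))
        =O[nhds 0] fun t : ℝ => t ^ (4 * n) :=
      (SCAux2.isBigO_matmul (SCAux2.isBigO_matmul hQnegbd hQbd) hsq).congr_right
        fun t => by norm_num
    exact (hprod.const_smul_left ((4 : ℂ)⁻¹)).congr_left fun t => rfl
  -- ### conclusion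
  constructor
  · refine (isBigO_of_le (nhds 0) fun t => ?_).trans hG1c
    have hmm : (R t - exp (t • A)).map Complex.ofReal
        = (R t).map Complex.ofReal - E t := by
      rw [← hexpmap t]
      ext i j
      rw [show ((R t - exp (t • A)).map Complex.ofReal) i j
          = ((R t i j - (exp (t • A)) i j : ℝ) : ℂ) from rfl]
      rw [show ((R t).map Complex.ofReal - (exp (t • A)).map Complex.ofReal) i j
          = ((R t i j : ℝ) : ℂ) - ((exp (t • A)) i j : ℝ) from rfl]
      push_cast
      ring
    calc ‖R t - exp (t • A)‖
        ≤ ‖(R t - exp (t • A)).map Complex.ofReal‖ := SCAux2.real_norm_le_map _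
      _ = ‖(R t).map Complex.ofReal - E t‖ := by rw [hmm]
  · refine (isBigO_of_le (nhds 0) fun t => ?_).trans hG2c
    exact SCAux2.real_norm_le_map _
end

section
/- Fix d = 2m, a real matrix A, and a time-symmetric second-order real basic method S for A which in addition is symplectic: S(z)ᵀ·J·S(z) = J for all z ∈ ℂ, where J is the canonical symplectic 2m×2m matrix. Let n ≥ 2 and let α_1, …, α_s ∈ ℂ be symmetric-conjugate (α_{s+1−j} = conj(α_j)), and suppose the composition P(h) = S(α_s h)⋯S(α_1 h) satisfies (fun h : ℝ => P(h) − exp(h·A)) = O(h^{2n}) as h → 0 (order 2n−1). Let R(h) be the entrywise real part of P(h). Then R is pseudo-symplectic of order 4n−1, i.e. (fun h : ℝ => R(h)ᵀ·J·R(h) − J) is O(h^{4n}) as h → 0. -/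
open Matrix Asymptotics Filter NormedSpace

section ExpMap

variable {ι : Type*} [Fintype ι] [DecidableEq ι]

attribute [local instance] Matrix.linftyOpNormedRing Matrix.linftyOpNormedAlgebra

lemma aux_exp_map_ofReal (B : Matrix ι ι ℝ) :
    NormedSpace.exp (B.map Complex.ofReal) = (NormedSpace.exp B).map Complex.ofReal := by
  have h := map_exp ((Complex.ofRealHom).mapMatrix (m := ι))
    (Continuous.matrix_map continuous_id Complex.continuous_ofReal) B
  exact h.symm

end ExpMap

section Helpers

set_option linter.unusedSectionVars false

variable {ι : Type*} [Fintype ι] [DecidableEq ι]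

attribute [local instance] Matrix.normedAddCommGroup Matrix.normedSpace

lemma aux_matrix_norm_mul_le {α : Type*} [NormedRing α] (M N : Matrix ι ι α) :
    ‖M * N‖ ≤ (Fintype.card ι) * ‖M‖ * ‖N‖ := by
  rw [Matrix.norm_le_iff (by positivity)]
  intro i j
  calc ‖(M * N) i j‖ = ‖∑ k, M i k * N k j‖ := by rw [Matrix.mul_apply]
    _ ≤ ∑ k, ‖M i k * N k j‖ := norm_sum_le _ _
    _ ≤ ∑ _k : ι, ‖M‖ * ‖N‖ := Finset.sum_le_sum fun k _ => le_trans (norm_mul_le _ _)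
        (mul_le_mul (Matrix.norm_entry_le_entrywise_sup_norm M)
          (Matrix.norm_entry_le_entrywise_sup_norm N) (norm_nonneg _) (norm_nonneg _))
    _ = Fintype.card ι * ‖M‖ * ‖N‖ := by
        rw [Finset.sum_const, Finset.card_univ, nsmul_eq_mul, mul_assoc]

lemma aux_isBigO_matrix_mul {α : Type*} [NormedRing α] {l : Filter ℝ}
    {f g : ℝ → Matrix ι ι α} {u v : ℝ → ℝ}
    (hf : f =O[l] u) (hg : g =O[l] v) :
    (fun h => f h * g h) =O[l] fun h => u h * v h := by
  obtain ⟨c1, hc1⟩ := hf.bound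
  obtain ⟨c2, hc2⟩ := hg.bound
  refine IsBigO.of_bound ((Fintype.card ι) * c1 * c2) ?_
  filter_upwards [hc1, hc2] with h h1 h2
  calc ‖f h * g h‖ ≤ Fintype.card ι * ‖f h‖ * ‖g h‖ := aux_matrix_norm_mul_le _ _
    _ ≤ Fintype.card ι * ((c1 * ‖u h‖) * (c2 * ‖v h‖)) := by
        rw [mul_assoc]
        refine mul_le_mul_of_nonneg_left ?_ (by positivity)
        exact mul_le_mul h1 h2 (norm_nonneg _) (le_trans (norm_nonneg _) h1)
    _ = Fintype.card ι * c1 * c2 * ‖u h * v h‖ := by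
        rw [norm_mul]; ring

lemma aux_isBigO_map_im {l : Filter ℝ} {f : ℝ → Matrix ι ι ℂ} {u : ℝ → ℝ} (hf : f =O[l] u) :
    (fun h => (f h).map Complex.im) =O[l] u := by
  refine IsBigO.trans ?_ hf
  refine IsBigO.of_bound 1 (Eventually.of_forall fun h => ?_)
  rw [one_mul, Matrix.norm_le_iff (norm_nonneg _)]
  intro i j
  have h1 : ‖(f h).map Complex.im i j‖ ≤ ‖f h i j‖ := by
    simpa [Matrix.map_apply] using Complex.abs_im_le_norm (f h i j)
  exact h1.trans (Matrix.norm_entry_le_entrywise_sup_norm _)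

lemma aux_list_prod_symplectic {Jc : Matrix ι ι ℂ} :
    ∀ l : List (Matrix ι ι ℂ), (∀ M ∈ l, Mᵀ * Jc * M = Jc) → (l.prod)ᵀ * Jc * l.prod = Jc
  | [], _ => by simp
  | a :: l, h => by
    have ha := h a (List.mem_cons_self)
    have hl := aux_list_prod_symplectic l (fun M hM => h M (List.mem_cons_of_mem a hM))
    rw [List.prod_cons, Matrix.transpose_mul]
    calc l.prodᵀ * aᵀ * Jc * (a * l.prod)
        = l.prodᵀ * (aᵀ * Jc * a) * l.prod := by noncomm_ring
      _ = Jc := by rw [ha]; exact hl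

end Helpers

attribute [local instance] Matrix.normedAddCommGroup Matrix.normedSpace

/-- Proposition 2(a) of the paper, linear/matrix form, symplecticity part:
the real part of a symmetric-conjugate composition of odd order `2n-1` of a
time-symmetric second-order real symplectic basic method is pseudo-symplectic
of order `4n-1`. -/
theorem symmetric_conjugate_odd_order_pseudo_symplectic
    (m s n : ℕ) (hn : 2 ≤ n)
    (A : Matrix (Fin (m + m)) (Fin (m + m)) ℝ)
    (S : ℂ → Matrix (Fin (m + m)) (Fin (m + m)) ℂ)
    -- `S` is analytic
    (hAnal : ∀ z : ℂ, AnalyticAt ℂ S z)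
    -- `S` is time-symmetric
    (hTS : ∀ z : ℂ, S z * S (-z) = 1)
    -- `S` is real
    (hReal : ∀ z : ℂ, (S z).map (starRingEnd ℂ) = S (starRingEnd ℂ z))
    -- `S` is a second-order approximation of `exp (h A)`
    (hOrd2 : (fun h : ℝ => S (h : ℂ) - NormedSpace.exp ((h : ℂ) • A.map Complex.ofReal))
      =O[nhds 0] fun h : ℝ => h ^ 3)
    -- `S` is symplectic
    (hSymp : ∀ z : ℂ, (S z)ᵀ * (canonicalJ m).map Complex.ofReal * S z
      = (canonicalJ m).map Complex.ofReal)
    -- symmetric-conjugate coefficients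
    (α : Fin s → ℂ)
    (hSC : ∀ j : Fin s, α (Fin.rev j) = starRingEnd ℂ (α j))
    -- the composition `P h = S (α_s h) ⋯ S (α_1 h)`
    (P : ℝ → Matrix (Fin (m + m)) (Fin (m + m)) ℂ)
    (hP : ∀ h : ℝ, P h = ((List.ofFn fun j : Fin s => S (α j * (h : ℂ))).reverse).prod)
    -- ... is of odd order `2n-1`
    (hPord : (fun h : ℝ => P h - NormedSpace.exp ((h : ℂ) • A.map Complex.ofReal))
      =O[nhds 0] fun h : ℝ => h ^ (2 * n))
    -- `R h` is the entrywise real part of `P h`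
    (R : ℝ → Matrix (Fin (m + m)) (Fin (m + m)) ℝ)
    (hR : ∀ h : ℝ, R h = (P h).map Complex.re) :
    (fun h : ℝ => (R h)ᵀ * canonicalJ m * R h - canonicalJ m)
      =O[nhds 0] fun h : ℝ => h ^ (4 * n) := by
  set Jc : Matrix (Fin (m+m)) (Fin (m+m)) ℂ := (canonicalJ m).map Complex.ofReal with hJc
  -- `P h` is symplectic
  have hPsymp : ∀ h : ℝ, (P h)ᵀ * Jc * P h = Jc := by
    intro h
    rw [hP]
    apply aux_list_prod_symplectic
    intro M hM
    rw [List.mem_reverse, List.mem_ofFn] at hM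
    obtain ⟨j, rfl⟩ := hM
    exact hSymp _
  -- entrywise imaginary part of `P`
  set Q : ℝ → Matrix (Fin (m+m)) (Fin (m+m)) ℝ := fun h => (P h).map Complex.im with hQ
  -- map commutes with mul
  have hmul : ∀ U V : Matrix (Fin (m+m)) (Fin (m+m)) ℝ,
      (U * V).map Complex.ofReal = (U.map Complex.ofReal) * (V.map Complex.ofReal) := by
    intro U V
    ext i j
    simp [Matrix.mul_apply, Matrix.map_apply]
  have hsub : ∀ U V : Matrix (Fin (m+m)) (Fin (m+m)) ℝ,
      (U - V).map Complex.ofReal = U.map Complex.ofReal - V.map Complex.ofReal := by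
    intro U V; ext i j; simp [Matrix.map_apply, Matrix.sub_apply]
  have hadd : ∀ U V : Matrix (Fin (m+m)) (Fin (m+m)) ℝ,
      (U + V).map Complex.ofReal = U.map Complex.ofReal + V.map Complex.ofReal := by
    intro U V; ext i j; simp [Matrix.map_apply, Matrix.add_apply]
  -- key algebraic identity
  have key : ∀ h : ℝ, (R h)ᵀ * canonicalJ m * R h - canonicalJ m
      = (Q h)ᵀ * canonicalJ m * Q h := by
    intro h
    have hdecomp : P h = (R h).map Complex.ofReal + Complex.I • (Q h).map Complex.ofReal := by
      ext i j
      simp only [Matrix.add_apply, Matrix.smul_apply, Matrix.map_apply, hR, hQ, smul_eq_mul]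
      rw [mul_comm]
      exact (Complex.re_add_im _).symm
    have hsymp := hPsymp h
    rw [hdecomp] at hsymp
    set X := (R h).map Complex.ofReal with hX
    set Z := (Q h).map Complex.ofReal with hZ
    have expand : (X + Complex.I • Z)ᵀ * Jc * (X + Complex.I • Z)
        = (Xᵀ * Jc * X - Zᵀ * Jc * Z) + Complex.I • (Xᵀ * Jc * Z + Zᵀ * Jc * X) := by
      rw [Matrix.transpose_add, Matrix.transpose_smul]
      simp only [Matrix.add_mul, Matrix.mul_add, Matrix.smul_mul, Matrix.mul_smul,
        smul_smul, Complex.I_mul_I, neg_one_smul, smul_add]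
      abel
    rw [expand] at hsymp
    have e1 : Xᵀ * Jc * X - Zᵀ * Jc * Z
        = ((R h)ᵀ * canonicalJ m * R h - (Q h)ᵀ * canonicalJ m * Q h).map Complex.ofReal := by
      rw [hX, hZ, hJc, hsub, hmul, hmul, hmul, hmul, Matrix.transpose_map,
        Matrix.transpose_map]
    have e2 : Xᵀ * Jc * Z + Zᵀ * Jc * X
        = ((R h)ᵀ * canonicalJ m * Q h + (Q h)ᵀ * canonicalJ m * R h).map Complex.ofReal := by
      rw [hX, hZ, hJc, hadd, hmul, hmul, hmul, hmul, Matrix.transpose_map,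
        Matrix.transpose_map]
    rw [e1, e2, hJc] at hsymp
    have hre : (R h)ᵀ * canonicalJ m * R h - (Q h)ᵀ * canonicalJ m * Q h = canonicalJ m := by
      ext i j
      have := congrArg (fun M => (M i j).re) hsymp
      simpa [Matrix.add_apply, Matrix.smul_apply, Matrix.map_apply, smul_eq_mul,
        Complex.add_re, Complex.mul_re] using this
    rw [sub_eq_iff_eq_add] at hre ⊢
    rw [hre]
    exact add_comm _ _
  -- `Q` is O(h^(2n))
  have hQbig : Q =O[nhds 0] fun h : ℝ => h ^ (2 * n) := by
    have him := aux_isBigO_map_im hPord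
    have heq : Q = fun h : ℝ =>
        (P h - NormedSpace.exp ((h : ℂ) • A.map Complex.ofReal)).map Complex.im := by
      funext h
      have h1 : (h : ℂ) • A.map Complex.ofReal = (h • A).map Complex.ofReal := by
        ext i j
        simp [Matrix.map_apply, Complex.ofReal_mul]
      have h2 : (NormedSpace.exp ((h : ℂ) • A.map Complex.ofReal)).map Complex.im = 0 := by
        rw [h1, aux_exp_map_ofReal]
        ext i j
        simp [Matrix.map_apply]
      ext i j
      have h3 := congrFun (congrFun h2 i) j
      simp only [Matrix.map_apply, Matrix.zero_apply] at h3
      simp only [hQ, Matrix.map_apply, Matrix.sub_apply, Complex.sub_im, h3, sub_zero]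
    rw [heq]
    exact him
  -- transpose of `Q` is O(h^(2n))
  have hQt : (fun h : ℝ => (Q h)ᵀ) =O[nhds 0] fun h : ℝ => h ^ (2 * n) := by
    refine IsBigO.trans ?_ hQbig
    refine IsBigO.of_bound 1 (Eventually.of_forall fun h => ?_)
    rw [one_mul, Matrix.norm_transpose]
  -- J * Q is O(h^(2n))
  have hJQ : (fun h : ℝ => canonicalJ m * Q h) =O[nhds 0] fun h : ℝ => h ^ (2 * n) := by
    have hconst : (fun _ : ℝ => canonicalJ m) =O[nhds 0] (fun _ : ℝ => (1 : ℝ)) :=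
      isBigO_const_const _ one_ne_zero _
    have := aux_isBigO_matrix_mul hconst hQbig
    simpa using this
  have final := aux_isBigO_matrix_mul hQt hJQ
  have hgoal : (fun h : ℝ => (R h)ᵀ * canonicalJ m * R h - canonicalJ m)
      = fun h : ℝ => (Q h)ᵀ * (canonicalJ m * Q h) := by
    funext h
    rw [key h, Matrix.mul_assoc]
  have hrhs : (fun h : ℝ => h ^ (2 * n) * h ^ (2 * n)) = fun h : ℝ => h ^ (4 * n) := by
    funext h
    rw [← pow_add]
    congr 1
    omega
  rw [hgoal, ← hrhs]
  exact final
end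

section
/- Fix d ≥ 1, a real matrix A, and a time-symmetric second-order real basic method S for A. Let n ≥ 2 and let α_1, …, α_s ∈ ℂ be symmetric-conjugate, i.e. α_{s+1−j} = conj(α_j) for all j, and suppose the composition P(h) = S(α_s h)·S(α_{s−1} h)⋯S(α_1 h) is of even order 2n, i.e. (fun h : ℝ => P(h) − exp(h·A)) is O(h^{2n+1}) as h → 0. Let R(h) be the entrywise real part of P(h). Then (fun h : ℝ => R(h) − exp(h·A)) is O(h^{2n+1}) as h → 0 (R is of order 2n), and R is pseudo-symmetric of order 4n+3, i.e. (fun h : ℝ => R(−h)·R(h) − 1) is O(h^{4n+4}) as h → 0. -/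
open Matrix Asymptotics Filter NormedSpace

/-! ### Auxiliary lemmas that do not mention matrix norms -/

section ListLemmas

variable {β : Type*}

lemma sc_ofFn_rev : ∀ {m : ℕ} (f : Fin m → β),
    List.ofFn (fun i => f i.rev) = (List.ofFn f).reverse := by
  intro m
  induction m with
  | zero => intro f; simp
  | succ m ih =>
    intro f
    rw [List.ofFn_succ' f, List.ofFn_succ (f := fun i => f i.rev)]
    have h0 : (0 : Fin (m + 1)).rev = Fin.last m := by
      ext; simp
    have hsucc : ∀ i : Fin m, (Fin.succ i).rev = (Fin.rev i).castSucc := by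
      intro i; rw [Fin.rev_succ]
    simp only [h0, hsucc]
    rw [ih (fun i => f i.castSucc)]
    simp [List.concat_eq_append]

variable [Monoid β]

lemma sc_prod_rev_mul : ∀ {m : ℕ} (f g : Fin m → β), (∀ j, g j * f j = 1) →
    (List.ofFn g).reverse.prod * (List.ofFn f).prod = 1 := by
  intro m
  induction m with
  | zero => intro f g _; simp
  | succ m ih =>
    intro f g hfg
    rw [List.ofFn_succ (f := f), List.ofFn_succ (f := g), List.reverse_cons, List.prod_append,
      List.prod_cons, List.prod_cons, List.prod_nil, mul_one]
    calc (List.ofFn fun i => g i.succ).reverse.prod * g 0 * (f 0 * (List.ofFn fun i => f i.succ).prod)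
        = (List.ofFn fun i => g i.succ).reverse.prod * (g 0 * f 0) *
            (List.ofFn fun i => f i.succ).prod := by
          simp only [mul_assoc]
      _ = (List.ofFn fun i => g i.succ).reverse.prod * (List.ofFn fun i => f i.succ).prod := by
          rw [hfg 0, mul_one]
      _ = 1 := ih _ _ (fun j => hfg j.succ)

lemma sc_prod_mul_rev : ∀ {m : ℕ} (f g : Fin m → β), (∀ j, f j * g j = 1) →
    (List.ofFn f).prod * (List.ofFn g).reverse.prod = 1 := by
  intro m
  induction m with
  | zero => intro f g _; simp
  | succ m ih =>
    intro f g hfg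
    rw [List.ofFn_succ (f := f), List.ofFn_succ (f := g), List.reverse_cons, List.prod_append,
      List.prod_cons, List.prod_cons, List.prod_nil, mul_one]
    calc f 0 * (List.ofFn fun i => f i.succ).prod *
          ((List.ofFn fun i => g i.succ).reverse.prod * g 0)
        = f 0 * ((List.ofFn fun i => f i.succ).prod *
            (List.ofFn fun i => g i.succ).reverse.prod) * g 0 := by
          simp only [mul_assoc]
      _ = f 0 * g 0 := by rw [ih _ _ (fun j => hfg j.succ), mul_one]
      _ = 1 := hfg 0

end ListLemmas

/-! ### Scalar asymptotic lemmas -/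

section ScalarAsymptotics

variable {F : Type*} [NormedAddCommGroup F]

lemma sc_isBigO_of_norm_eq {G : Type*} [NormedAddCommGroup G] {l : Filter ℝ} {g : ℝ → ℝ}
    {f : ℝ → F} {f' : ℝ → G} (hnorm : ∀ x, ‖f' x‖ = ‖f x‖) (h : f =O[l] g) : f' =O[l] g := by
  rw [← isBigO_norm_left] at h ⊢
  have : (fun x => ‖f' x‖) = fun x => ‖f x‖ := funext hnorm
  rw [this]
  exact h

lemma sc_pow_isBigO {k m : ℕ} (hkm : k ≤ m) :
    (fun x : ℝ => x ^ m) =O[nhds 0] fun x => x ^ k := by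
  rw [isBigO_iff]
  refine ⟨1, ?_⟩
  have hball : Metric.ball (0 : ℝ) 1 ∈ nhds (0 : ℝ) := Metric.ball_mem_nhds _ one_pos
  filter_upwards [hball] with x hx
  rw [Metric.mem_ball, Real.dist_eq, sub_zero] at hx
  rw [one_mul, Real.norm_eq_abs, Real.norm_eq_abs, abs_pow, abs_pow]
  exact pow_le_pow_of_le_one (abs_nonneg x) (le_of_lt hx) hkm

lemma sc_isBigO_comp_neg {f : ℝ → F} {k : ℕ} (h : f =O[nhds 0] fun x : ℝ => x ^ k) :
    (fun x => f (-x)) =O[nhds 0] fun x : ℝ => x ^ k := by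
  have hneg : Filter.Tendsto (fun x : ℝ => -x) (nhds 0) (nhds 0) := by
    simpa using (continuous_neg.tendsto (0 : ℝ))
  have h2 := h.comp_tendsto hneg
  refine IsBigO.trans ?_ (isBigO_of_le _ (fun x => le_of_eq (by simp [abs_pow] : ‖(-x) ^ k‖ = ‖x ^ k‖)))
  exact h2

lemma sc_eq_zero_of_isBigO_pow [NormedSpace ℝ F] (c : F) (k : ℕ)
    (h : (fun x : ℝ => x ^ k • c) =O[nhds 0] fun x => x ^ (k + 1)) : c = 0 := by
  rcases isBigO_iff.mp h with ⟨C, hC⟩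
  have key : ∀ᶠ x in nhdsWithin (0 : ℝ) (Set.Ioi 0), ‖c‖ ≤ C * x := by
    filter_upwards [hC.filter_mono nhdsWithin_le_nhds, self_mem_nhdsWithin] with x hx hxpos
    have hxpos' : (0 : ℝ) < x := hxpos
    have hxk : (0 : ℝ) < x ^ k := pow_pos hxpos' k
    rw [norm_smul, norm_pow, Real.norm_eq_abs, abs_of_pos hxpos', norm_pow,
      Real.norm_eq_abs, abs_of_pos hxpos', pow_succ] at hx
    have h2 : x ^ k * ‖c‖ ≤ x ^ k * (C * x) := by
      calc x ^ k * ‖c‖ ≤ C * (x ^ k * x) := hx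
        _ = x ^ k * (C * x) := by ring
    exact le_of_mul_le_mul_left h2 hxk
  have hlim : Filter.Tendsto (fun x : ℝ => C * x) (nhdsWithin (0 : ℝ) (Set.Ioi 0)) (nhds 0) := by
    have h1 : Filter.Tendsto (fun x : ℝ => C * x) (nhds 0) (nhds (C * 0)) :=
      (continuous_const.mul continuous_id).tendsto 0
    rw [mul_zero] at h1
    exact h1.mono_left nhdsWithin_le_nhds
  have hle : ‖c‖ ≤ 0 := ge_of_tendsto hlim key
  simpa using norm_le_zero_iff.mp hle

lemma sc_isBigO_succ_of_analyticAt [NormedSpace ℝ F] {f : ℝ → F} {m : ℕ}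
    (hf : AnalyticAt ℝ f 0) (hO : f =O[nhds 0] fun x => x ^ m) :
    ∃ c : F, (fun x => f x - x ^ m • c) =O[nhds 0] fun x => x ^ (m + 1) := by
  obtain ⟨p, hp⟩ := hf
  let coeffF : ℕ → F := fun k => p.coeff k
  have hpk : ∀ (k : ℕ) (y : ℝ), (p k fun _ => y) = y ^ k • coeffF k := by
    intro k y
    have h1 : (fun _ : Fin k => y) = fun _ : Fin k => y • (1 : ℝ) := by
      funext _; simp
    rw [h1, (p k).map_smul_univ]
    simp only [Finset.prod_const, Finset.card_univ, Fintype.card_fin]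
    rfl
  have hps : ∀ (N : ℕ) (y : ℝ),
      p.partialSum N y = ∑ k ∈ Finset.range N, y ^ k • coeffF k := by
    intro N y
    unfold FormalMultilinearSeries.partialSum
    exact Finset.sum_congr rfl fun k _ => hpk k y
  have hOsub : ∀ N : ℕ, (fun y => f y - p.partialSum N y) =O[nhds 0] fun y => y ^ N := by
    intro N
    have h1 := hp.isBigO_sub_partialSum_pow N
    simp only [zero_add] at h1
    refine IsBigO.trans h1 (isBigO_of_le _ fun y => le_of_eq ?_)
    simp [abs_pow]
  have hzero : ∀ i, i < m → coeffF i = 0 := by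
    intro i
    induction i using Nat.strong_induction_on with
    | _ i ih =>
      intro him
      have hps' : ∀ y : ℝ, p.partialSum (i + 1) y = y ^ i • coeffF i := by
        intro y
        rw [hps, Finset.sum_range_succ]
        have hz : ∑ k ∈ Finset.range i, y ^ k • coeffF k = 0 :=
          Finset.sum_eq_zero fun k hk => by
            rw [ih k (Finset.mem_range.mp hk) (lt_trans (Finset.mem_range.mp hk) him)]
            simp
        rw [hz, zero_add]
      have h3 : f =O[nhds 0] fun y : ℝ => y ^ (i + 1) :=
        hO.trans (sc_pow_isBigO (Nat.succ_le_of_lt him))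
      have h4 := h3.sub (hOsub (i + 1))
      have h5 : (fun y : ℝ => f y - (f y - p.partialSum (i + 1) y)) =
          fun y : ℝ => y ^ i • coeffF i := by
        funext y
        rw [sub_sub_cancel, hps']
      rw [h5] at h4
      exact sc_eq_zero_of_isBigO_pow _ _ h4
  refine ⟨coeffF m, ?_⟩
  have hps'' : ∀ y : ℝ, p.partialSum (m + 1) y = y ^ m • coeffF m := by
    intro y
    rw [hps, Finset.sum_range_succ]
    have hz : ∑ k ∈ Finset.range m, y ^ k • coeffF k = 0 :=
      Finset.sum_eq_zero fun k hk => by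
        rw [hzero k (Finset.mem_range.mp hk)]; simp
    rw [hz, zero_add]
  have h6 := hOsub (m + 1)
  have h7 : (fun y : ℝ => f y - p.partialSum (m + 1) y) =
      fun y : ℝ => f y - y ^ m • coeffF m := by
    funext y; rw [hps'']
  rw [h7] at h6
  exact h6

lemma sc_even_isBigO [NormedSpace ℝ F] {f : ℝ → F} {m : ℕ} (hm : Odd m)
    (hf : AnalyticAt ℝ f 0) (heven : ∀ x, f (-x) = f x)
    (hO : f =O[nhds 0] fun x => x ^ m) :
    f =O[nhds 0] fun x => x ^ (m + 1) := by
  obtain ⟨c, hc⟩ := sc_isBigO_succ_of_analyticAt hf hO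
  have hcneg : (fun x => f x + x ^ m • c) =O[nhds 0] fun x : ℝ => x ^ (m + 1) := by
    have h1 := sc_isBigO_comp_neg hc
    have h2 : (fun x : ℝ => f (-x) - (-x) ^ m • c) = fun x => f x + x ^ m • c := by
      funext x
      rw [heven x, Odd.neg_pow hm, neg_smul, sub_neg_eq_add]
    rw [h2] at h1
    exact h1
  have hdiff : (fun x : ℝ => x ^ m • ((2 : ℝ) • c)) =O[nhds 0] fun x => x ^ (m + 1) := by
    have h3 := hcneg.sub hc
    have h4 : (fun x : ℝ => (f x + x ^ m • c) - (f x - x ^ m • c)) =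
        fun x : ℝ => x ^ m • ((2 : ℝ) • c) := by
      funext x
      rw [two_smul, smul_add]
      abel
    rw [h4] at h3
    exact h3
  have h5 : (2 : ℝ) • c = 0 := sc_eq_zero_of_isBigO_pow _ _ hdiff
  have hc0 : c = 0 := by
    rcases smul_eq_zero.mp h5 with h | h
    · norm_num at h
    · exact h
  rw [hc0] at hc
  simpa using hc

end ScalarAsymptotics

/-! ### Analyticity of entries of the matrix exponential (via the `L∞`-operator norm) -/

section LinftyExp

attribute [local instance] Matrix.linftyOpNormedRing Matrix.linftyOpNormedAlgebra

variable {d : ℕ}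

lemma sc_exp_entry_analytic (M : Matrix (Fin d) (Fin d) ℂ) (i j : Fin d) :
    AnalyticAt ℝ (fun h : ℝ => exp ((h : ℂ) • M) i j) 0 := by
  -- the entry evaluation as a continuous linear map
  let π : Matrix (Fin d) (Fin d) ℂ →ₗ[ℂ] ℂ :=
    { toFun := fun N => N i j
      map_add' := fun _ _ => rfl
      map_smul' := fun _ _ => rfl }
  let πc : Matrix (Fin d) (Fin d) ℂ →L[ℂ] ℂ := LinearMap.toContinuousLinearMap π
  have hs : AnalyticAt ℂ (fun z : ℂ => z • M) 0 := by
    have := (ContinuousLinearMap.smulRight (ContinuousLinearMap.id ℂ ℂ) M).analyticAt (0 : ℂ)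
    exact this
  have he : AnalyticAt ℂ (exp ∘ fun z : ℂ => z • M) 0 := (exp_analytic _).comp hs
  have h2 : AnalyticAt ℂ (⇑πc ∘ (exp ∘ fun z : ℂ => z • M)) 0 := (πc.analyticAt _).comp he
  have h4 : AnalyticAt ℝ (⇑πc ∘ (exp ∘ fun z : ℂ => z • M)) 0 := h2.restrictScalars
  have h5 : AnalyticAt ℝ (fun t : ℝ => (t : ℂ)) 0 := Complex.ofRealCLM.analyticAt 0
  have h6 : AnalyticAt ℝ ((⇑πc ∘ (exp ∘ fun z : ℂ => z • M)) ∘ fun t : ℝ => (t : ℂ)) 0 := by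
    refine AnalyticAt.comp ?_ h5
    simpa using h4
  exact h6

end LinftyExp

attribute [local instance] Matrix.normedAddCommGroup Matrix.normedSpace

/-! ### Matrix-valued asymptotics and analyticity via entries (sup norm) -/

section MatrixBridge

variable {d : ℕ}

lemma sc_mat_isBigO_iff {α : Type*} [NormedAddCommGroup α] {l : Filter ℝ} {g : ℝ → ℝ}
    {f : ℝ → Matrix (Fin d) (Fin d) α} :
    f =O[l] g ↔ ∀ i j, (fun x => f x i j) =O[l] g := by
  constructor
  · intro h i j
    exact isBigO_pi.mp (isBigO_pi.mp h i) j
  · intro h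
    exact isBigO_pi.mpr fun i => isBigO_pi.mpr fun j => h i j

lemma sc_mat_analyticAt_iff {f : ℝ → Matrix (Fin d) (Fin d) ℂ} {x : ℝ} :
    AnalyticAt ℝ f x ↔ ∀ i j, AnalyticAt ℝ (fun y => f y i j) x := by
  constructor
  · intro h i j
    exact analyticAt_pi_iff.mp (analyticAt_pi_iff.mp h i) j
  · intro h
    exact analyticAt_pi_iff.mpr fun i => analyticAt_pi_iff.mpr fun j => h i j

lemma sc_mat_mul_isBigO {l : Filter ℝ} {f g : ℝ → Matrix (Fin d) (Fin d) ℂ} {u v : ℝ → ℝ}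
    (hf : f =O[l] u) (hg : g =O[l] v) :
    (fun x => f x * g x) =O[l] fun x => u x * v x := by
  rw [sc_mat_isBigO_iff] at hf hg ⊢
  intro i j
  have h1 : (fun x => (f x * g x) i j) = fun x => ∑ k, f x i k * g x k j := by
    funext x; exact Matrix.mul_apply
  rw [h1]
  exact IsBigO.fun_sum fun k _ => (hf i k).mul (hg k j)

lemma sc_mat_mul_analyticAt {f g : ℝ → Matrix (Fin d) (Fin d) ℂ} {x : ℝ}
    (hf : AnalyticAt ℝ f x) (hg : AnalyticAt ℝ g x) :
    AnalyticAt ℝ (fun y => f y * g y) x := by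
  rw [sc_mat_analyticAt_iff] at hf hg ⊢
  intro i j
  have h1 : (fun y => (f y * g y) i j) = fun y => ∑ k, f y i k * g y k j := by
    funext y; exact Matrix.mul_apply
  rw [h1]
  exact Finset.analyticAt_fun_sum _ fun k _ => (hf i k).mul (hg k j)

lemma sc_mat_listProd_analyticAt :
    ∀ (L : List (ℝ → Matrix (Fin d) (Fin d) ℂ)), (∀ f ∈ L, AnalyticAt ℝ f 0) →
      AnalyticAt ℝ (fun h => (L.map (fun f => f h)).prod) 0 := by
  intro L
  induction L with
  | nil => intro _; simpa using analyticAt_const (v := (1 : Matrix (Fin d) (Fin d) ℂ))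
  | cons f L ih =>
    intro hmem
    have h1 : AnalyticAt ℝ (fun h => f h * (L.map (fun f => f h)).prod) 0 :=
      sc_mat_mul_analyticAt (hmem f List.mem_cons_self)
        (ih fun g hg => hmem g (List.mem_cons_of_mem f hg))
    simpa using h1

end MatrixBridge

/-- Proposition 2(b) of the paper, linear/matrix form:
the real part of a symmetric-conjugate composition of even order `2n` of a
time-symmetric second-order real basic method is of order `2n` and is
pseudo-symmetric of order `4n+3`. -/
theorem symmetric_conjugate_even_order_real_part
    (d s n : ℕ) (hd : 1 ≤ d) (hn : 2 ≤ n)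
    (A : Matrix (Fin d) (Fin d) ℝ)
    (S : ℂ → Matrix (Fin d) (Fin d) ℂ)
    -- `S` is analytic
    (hAnal : ∀ z : ℂ, AnalyticAt ℂ S z)
    -- `S` is time-symmetric
    (hTS : ∀ z : ℂ, S z * S (-z) = 1)
    -- `S` is real: the entrywise conjugate of `S z` is `S z̄`
    (hReal : ∀ z : ℂ, (S z).map (starRingEnd ℂ) = S (starRingEnd ℂ z))
    -- `S` is a second-order approximation of `exp (h A)`
    (hOrd2 : (fun h : ℝ => S (h : ℂ) - exp ((h : ℂ) • A.map Complex.ofReal))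
      =O[nhds 0] fun h : ℝ => h ^ 3)
    -- symmetric-conjugate coefficients
    (α : Fin s → ℂ)
    (hSC : ∀ j : Fin s, α (Fin.rev j) = starRingEnd ℂ (α j))
    -- the composition `P h = S (α_s h) ⋯ S (α_1 h)`
    (P : ℝ → Matrix (Fin d) (Fin d) ℂ)
    (hP : ∀ h : ℝ, P h = ((List.ofFn fun j : Fin s => S (α j * (h : ℂ))).reverse).prod)
    -- ... is of even order `2n`
    (hPord : (fun h : ℝ => P h - exp ((h : ℂ) • A.map Complex.ofReal))
      =O[nhds 0] fun h : ℝ => h ^ (2 * n + 1))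
    -- `R h` is the entrywise real part of `P h`
    (R : ℝ → Matrix (Fin d) (Fin d) ℝ)
    (hR : ∀ h : ℝ, R h = (P h).map Complex.re) :
    ((fun h : ℝ => R h - exp (h • A)) =O[nhds 0] fun h : ℝ => h ^ (2 * n + 1)) ∧
      ((fun h : ℝ => R (-h) * R h - 1) =O[nhds 0] fun h : ℝ => h ^ (4 * n + 4)) := by
  classical
  set Ac : Matrix (Fin d) (Fin d) ℂ := A.map Complex.ofReal with hAc
  set E : ℝ → Matrix (Fin d) (Fin d) ℂ := fun h => exp ((h : ℂ) • Ac) with hE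
  set Q : ℝ → Matrix (Fin d) (Fin d) ℂ :=
    fun h => (List.ofFn fun j : Fin s => S (α j * (h : ℂ))).prod with hQ
  set Δ : ℝ → Matrix (Fin d) (Fin d) ℂ := fun h => P h - E h with hΔdef
  -- `E` is the complexification of the real matrix exponential
  have hEreal : ∀ h : ℝ, E h = (exp (h • A)).map Complex.ofReal := by
    intro h
    letI : NormedRing (Matrix (Fin d) (Fin d) ℝ) := Matrix.linftyOpNormedRing
    letI : NormedAlgebra ℝ (Matrix (Fin d) (Fin d) ℝ) := Matrix.linftyOpNormedAlgebra
    letI : NormedRing (Matrix (Fin d) (Fin d) ℂ) := Matrix.linftyOpNormedRing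
    letI : NormedAlgebra ℝ (Matrix (Fin d) (Fin d) ℂ) := Matrix.linftyOpNormedAlgebra
    letI : NormedAlgebra ℚ (Matrix (Fin d) (Fin d) ℝ) := Matrix.linftyOpNormedAlgebra
    letI : NormedAlgebra ℚ (Matrix (Fin d) (Fin d) ℂ) := Matrix.linftyOpNormedAlgebra
    haveI : CompleteSpace (Matrix (Fin d) (Fin d) ℝ) := FiniteDimensional.complete ℝ _
    haveI : CompleteSpace (Matrix (Fin d) (Fin d) ℂ) := FiniteDimensional.complete ℝ _
    have hcont : Continuous ((Complex.ofRealHom : ℝ →+* ℂ).mapMatrix :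
        Matrix (Fin d) (Fin d) ℝ →+* Matrix (Fin d) (Fin d) ℂ) := by
      show Continuous fun M : Matrix (Fin d) (Fin d) ℝ => M.map Complex.ofReal
      exact Continuous.matrix_map continuous_id Complex.continuous_ofReal
    have h1 := @map_exp _ _ _ _ (FiniteDimensional.complete ℝ _) _ _ _ _ _ ((Complex.ofRealHom : ℝ →+* ℂ).mapMatrix) hcont (h • A)
    have h2 : (Complex.ofRealHom : ℝ →+* ℂ).mapMatrix (h • A) = (h : ℂ) • Ac := by
      ext i j
      simp [RingHom.mapMatrix_apply, Matrix.map_apply, hAc, Complex.real_smul]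
    rw [h2] at h1
    have h3 : exp ((h : ℂ) • Ac) = exp ((h : ℂ) • Ac) := by
      rfl
    rw [hE]
    simp only [RingHom.mapMatrix_apply] at h1
    exact h1.symm
  -- `E (-h) * E h = 1`
  have hEmul : ∀ h : ℝ, E (-h) * E h = 1 := by
    intro h
    have h1 : ((-h : ℝ) : ℂ) • Ac = -((h : ℂ) • Ac) := by
      push_cast
      rw [neg_smul]
    have h2 := Matrix.exp_add_of_commute (-((h : ℂ) • Ac)) ((h : ℂ) • Ac)
      (Commute.neg_left (Commute.refl _))
    rw [neg_add_cancel, exp_zero] at h2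
    simp only [hE]
    rw [h1]
    exact h2.symm
  -- conjugation identity: the entrywise conjugate of `P h` is `Q h`
  have hconj : ∀ h : ℝ, (P h).map (starRingEnd ℂ) = Q h := by
    intro h
    rw [hP h]
    have h1 : ((List.ofFn fun j : Fin s => S (α j * (h : ℂ))).reverse.prod).map (starRingEnd ℂ) =
        ((List.ofFn fun j : Fin s => S (α j * (h : ℂ))).reverse.map
          (fun M : Matrix (Fin d) (Fin d) ℂ => M.map (starRingEnd ℂ))).prod := by
      have := map_list_prod ((starRingEnd ℂ).mapMatrix :
        Matrix (Fin d) (Fin d) ℂ →+* Matrix (Fin d) (Fin d) ℂ)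
        ((List.ofFn fun j : Fin s => S (α j * (h : ℂ))).reverse)
      exact this
    rw [h1, List.map_reverse, List.map_ofFn]
    have h2 : ((fun M : Matrix (Fin d) (Fin d) ℂ => M.map (starRingEnd ℂ)) ∘
        fun j : Fin s => S (α j * (h : ℂ))) = fun j : Fin s => S (α (Fin.rev j) * (h : ℂ)) := by
      funext j
      simp only [Function.comp_apply]
      rw [hReal, _root_.map_mul, Complex.conj_ofReal, hSC j]
    rw [h2]
    have h3 : (List.ofFn fun j : Fin s => S (α (Fin.rev j) * (h : ℂ))) =
        (List.ofFn fun j : Fin s => S (α j * (h : ℂ))).reverse :=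
      sc_ofFn_rev (fun i : Fin s => S (α i * (h : ℂ)))
    rw [h3, List.reverse_reverse]
  -- telescoping identities
  have hPQ : ∀ h : ℝ, P (-h) * Q h = 1 := by
    intro h
    have hfe : (fun j : Fin s => S (α j * ((-h : ℝ) : ℂ))) =
        fun j : Fin s => S (-(α j * (h : ℂ))) := by
      funext j
      congr 1
      push_cast
      ring
    have h1 : P (-h) = (List.ofFn fun j : Fin s => S (-(α j * (h : ℂ)))).reverse.prod := by
      rw [hP (-h), hfe]
    rw [h1, hQ]
    exact sc_prod_rev_mul _ _ fun j => by
      have := hTS (-(α j * (h : ℂ)))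
      rwa [neg_neg] at this
  have hQP : ∀ h : ℝ, Q h * P (-h) = 1 := by
    intro h
    have hfe : (fun j : Fin s => S (α j * ((-h : ℝ) : ℂ))) =
        fun j : Fin s => S (-(α j * (h : ℂ))) := by
      funext j
      congr 1
      push_cast
      ring
    have h1 : P (-h) = (List.ofFn fun j : Fin s => S (-(α j * (h : ℂ)))).reverse.prod := by
      rw [hP (-h), hfe]
    rw [h1, hQ]
    exact sc_prod_mul_rev _ _ fun j => hTS (α j * (h : ℂ))
  -- analyticity of `P` and `Q` at `0`
  have hcomp : ∀ j : Fin s, AnalyticAt ℝ (fun h : ℝ => S (α j * (h : ℂ))) 0 := by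
    intro j
    have hinner : AnalyticAt ℝ (fun h : ℝ => α j * (h : ℂ)) 0 := by
      have := ((α j) • Complex.ofRealCLM).analyticAt (0 : ℝ)
      exact this
    have := AnalyticAt.comp (f := fun h : ℝ => α j * (h : ℂ)) (x := (0 : ℝ))
      ((hAnal _).restrictScalars) hinner
    exact this
  have hPanal : AnalyticAt ℝ P 0 := by
    have h1 : P = fun h : ℝ =>
        (((List.ofFn fun j : Fin s => (fun h' : ℝ => S (α j * (h' : ℂ)))).reverse).map
          (fun f => f h)).prod := by
      funext h
      rw [hP h, List.map_reverse, List.map_ofFn]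
      rfl
    rw [h1]
    apply sc_mat_listProd_analyticAt
    intro f hf
    rw [List.mem_reverse, List.mem_ofFn] at hf
    obtain ⟨j, rfl⟩ := hf
    exact hcomp j
  have hQanal : AnalyticAt ℝ Q 0 := by
    have h1 : Q = fun h : ℝ =>
        ((List.ofFn fun j : Fin s => (fun h' : ℝ => S (α j * (h' : ℂ)))).map
          (fun f => f h)).prod := by
      funext h
      rw [hQ, List.map_ofFn]
      rfl
    rw [h1]
    apply sc_mat_listProd_analyticAt
    intro f hf
    rw [List.mem_ofFn] at hf
    obtain ⟨j, rfl⟩ := hf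
    exact hcomp j
  -- analyticity of `E` at `0`, and `E 0 = 1`
  have hEanal : AnalyticAt ℝ E 0 := by
    rw [sc_mat_analyticAt_iff]
    intro i j
    exact sc_exp_entry_analytic Ac i j
  have hE0 : E 0 = 1 := by
    rw [hE]
    simp only [Complex.ofReal_zero, zero_smul]
    exact exp_zero
  -- `Δ` is analytic at `0` and `Δ = O(h^(2n+1))`
  have hΔO : Δ =O[nhds 0] fun h : ℝ => h ^ (2 * n + 1) := hPord
  have hΔanal : AnalyticAt ℝ Δ 0 := hPanal.sub hEanal
  ---- Part (i)
  have part1 : (fun h : ℝ => R h - exp (h • A)) =O[nhds 0] fun h : ℝ => h ^ (2 * n + 1) := by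
    rw [sc_mat_isBigO_iff]
    intro i j
    have hentry : (fun h : ℝ => (R h - exp (h • A)) i j) = fun h : ℝ => (Δ h i j).re := by
      funext h
      have h1 : R h i j = (P h i j).re := by rw [hR h]; rfl
      have h2 : (exp (h • A)) i j = (E h i j).re := by
        rw [hEreal h]
        simp [Matrix.map_apply]
      have h3 : (R h - exp (h • A)) i j = R h i j - (exp (h • A)) i j := rfl
      rw [h3, h1, h2]
      have h4 : Δ h i j = P h i j - E h i j := rfl
      rw [h4, Complex.sub_re]
    rw [hentry]
    have h5 : (fun h : ℝ => Δ h i j) =O[nhds 0] fun h : ℝ => h ^ (2 * n + 1) :=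
      sc_mat_isBigO_iff.mp hΔO i j
    refine IsBigO.trans ?_ h5
    apply isBigO_of_le
    intro h
    rw [Real.norm_eq_abs]
    exact (Complex.abs_re_le_norm _).trans (le_of_eq rfl)
  refine ⟨part1, ?_⟩
  ---- Part (ii)
  -- `Δ h + Δ (-h) = O(h^(2n+2))` by the even/analytic argument
  have hneganal : AnalyticAt ℝ (fun h : ℝ => Δ (-h)) 0 := by
    have hneg : AnalyticAt ℝ (fun h : ℝ => -h) 0 :=
      (-(ContinuousLinearMap.id ℝ ℝ)).analyticAt 0
    have hΔ' : AnalyticAt ℝ Δ ((fun h : ℝ => -h) 0) := by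
      simpa using hΔanal
    have := hΔ'.comp hneg
    exact this
  have hG : (fun h : ℝ => Δ h + Δ (-h)) =O[nhds 0] fun h : ℝ => h ^ (2 * n + 2) := by
    have hGanal : AnalyticAt ℝ (fun h : ℝ => Δ h + Δ (-h)) 0 := hΔanal.add hneganal
    have hGeven : ∀ x : ℝ, Δ (-x) + Δ (-(-x)) = Δ x + Δ (-x) := by
      intro x
      rw [neg_neg]
      exact add_comm _ _
    have hGO : (fun h : ℝ => Δ h + Δ (-h)) =O[nhds 0] fun h : ℝ => h ^ (2 * n + 1) :=
      hΔO.add (sc_isBigO_comp_neg hΔO)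
    have hodd : Odd (2 * n + 1) := ⟨n, by ring⟩
    have := sc_even_isBigO hodd hGanal hGeven hGO
    exact this
  -- `E h - 1 = O(h)`
  have hE1 : (fun h : ℝ => E h - 1) =O[nhds 0] fun h : ℝ => h ^ 1 := by
    have h1 := hEanal.differentiableAt.isBigO_sub
    simp only [hE0, sub_zero] at h1
    refine h1.trans (isBigO_of_le _ fun x => le_of_eq (by simp))
  have hE1neg : (fun h : ℝ => E (-h) - 1) =O[nhds 0] fun h : ℝ => h ^ 1 :=
    sc_isBigO_comp_neg (f := fun h : ℝ => E h - 1) hE1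
  have hΔneg : (fun h : ℝ => Δ (-h)) =O[nhds 0] fun h : ℝ => h ^ (2 * n + 1) :=
    sc_isBigO_comp_neg hΔO
  -- `N h = P (-h) * P h - 1 = O(h^(2n+2))`
  set N : ℝ → Matrix (Fin d) (Fin d) ℂ := fun h => P (-h) * P h - 1 with hNdef
  have hNid : ∀ h : ℝ, N h = (Δ h + Δ (-h)) + ((E (-h) - 1) * Δ h + (Δ (-h) * (E h - 1)
      + Δ (-h) * Δ h)) := by
    intro h
    have hPE : ∀ t : ℝ, P t = Δ t + E t := by
      intro t
      rw [hΔdef]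
      simp
    simp only [hNdef]
    rw [hPE h, hPE (-h)]
    have hEE := hEmul h
    simp only [mul_add, add_mul, sub_mul, mul_sub, mul_one, one_mul]
    rw [hEE]
    abel
  have hN : N =O[nhds 0] fun h : ℝ => h ^ (2 * n + 2) := by
    have hfun : N = fun h : ℝ => (Δ h + Δ (-h)) + ((E (-h) - 1) * Δ h + (Δ (-h) * (E h - 1)
        + Δ (-h) * Δ h)) := funext hNid
    rw [hfun]
    have T2 : (fun h : ℝ => (E (-h) - 1) * Δ h) =O[nhds 0] fun h : ℝ => h ^ (2 * n + 2) := by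
      have := sc_mat_mul_isBigO hE1neg hΔO
      have heq : (fun h : ℝ => h ^ 1 * h ^ (2 * n + 1)) = fun h : ℝ => h ^ (2 * n + 2) := by
        funext h
        rw [← pow_add]
        congr 1
        ring
      rwa [heq] at this
    have T3 : (fun h : ℝ => Δ (-h) * (E h - 1)) =O[nhds 0] fun h : ℝ => h ^ (2 * n + 2) := by
      have := sc_mat_mul_isBigO hΔneg hE1
      have heq : (fun h : ℝ => h ^ (2 * n + 1) * h ^ 1) = fun h : ℝ => h ^ (2 * n + 2) := by
        funext h
        rw [← pow_add]
      rwa [heq] at this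
    have T4 : (fun h : ℝ => Δ (-h) * Δ h) =O[nhds 0] fun h : ℝ => h ^ (2 * n + 2) := by
      have := sc_mat_mul_isBigO hΔneg hΔO
      have heq : (fun h : ℝ => h ^ (2 * n + 1) * h ^ (2 * n + 1)) =
          fun h : ℝ => h ^ (4 * n + 2) := by
        funext h
        rw [← pow_add]
        congr 1
        ring
      rw [heq] at this
      exact this.trans (sc_pow_isBigO (by omega))
    exact hG.add (T2.add (T3.add T4))
  -- `Q` is bounded near `0`
  have hQbdd : Q =O[nhds 0] fun _ : ℝ => (1 : ℝ) :=
    (hQanal.continuousAt.tendsto).isBigO_one ℝ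
  -- `J h = P h - Q h = Q h * N h = O(h^(2n+2))`
  set J : ℝ → Matrix (Fin d) (Fin d) ℂ := fun h => P h - Q h with hJdef
  have hJ : J =O[nhds 0] fun h : ℝ => h ^ (2 * n + 2) := by
    have hJid : ∀ h : ℝ, J h = Q h * N h := by
      intro h
      simp only [hJdef, hNdef]
      rw [mul_sub, mul_one, ← mul_assoc, hQP h, one_mul]
    have hfun : J = fun h : ℝ => Q h * N h := funext hJid
    rw [hfun]
    have := sc_mat_mul_isBigO hQbdd hN
    have heq : (fun h : ℝ => (1 : ℝ) * h ^ (2 * n + 2)) = fun h : ℝ => h ^ (2 * n + 2) := by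
      funext h
      rw [one_mul]
    rwa [heq] at this
  have hJneg : (fun h : ℝ => J (-h)) =O[nhds 0] fun h : ℝ => h ^ (2 * n + 2) :=
    sc_isBigO_comp_neg hJ
  have hJJ : (fun h : ℝ => J (-h) * J h) =O[nhds 0] fun h : ℝ => h ^ (4 * n + 4) := by
    have := sc_mat_mul_isBigO hJneg hJ
    have heq : (fun h : ℝ => h ^ (2 * n + 2) * h ^ (2 * n + 2)) =
        fun h : ℝ => h ^ (4 * n + 4) := by
      funext h
      rw [← pow_add]
      congr 1
      ring
    rwa [heq] at this
  -- the key algebraic identity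
  have hRc : ∀ h : ℝ, (2 : ℂ) • (R h).map Complex.ofReal = P h + Q h := by
    intro h
    ext i j
    rw [← hconj h]
    have h1 : (R h).map Complex.ofReal i j = ((P h i j).re : ℂ) := by
      rw [hR h]
      simp [Matrix.map_apply]
    have h2 : ((2 : ℂ) • (R h).map Complex.ofReal) i j = (2 : ℂ) * ((P h i j).re : ℂ) := by
      rw [Matrix.smul_apply, h1, smul_eq_mul]
    rw [h2]
    have h3 : (P h + (P h).map (starRingEnd ℂ)) i j =
        P h i j + (starRingEnd ℂ) (P h i j) := by
      rw [Matrix.add_apply]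
      rfl
    rw [h3, Complex.add_conj]
    push_cast
    ring
  have hfinal : ∀ h : ℝ, (4 : ℂ) • ((R (-h) * R h - 1).map Complex.ofReal) = J (-h) * J h := by
    intro h
    have hmap : (R (-h) * R h - 1).map Complex.ofReal =
        (R (-h)).map Complex.ofReal * (R h).map Complex.ofReal - 1 := by
      have := map_sub ((Complex.ofRealHom : ℝ →+* ℂ).mapMatrix :
        Matrix (Fin d) (Fin d) ℝ →+* Matrix (Fin d) (Fin d) ℂ) (R (-h) * R h) 1
      rw [_root_.map_mul, _root_.map_one] at this
      exact this
    rw [hmap]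
    have h4 : (4 : ℂ) • ((R (-h)).map Complex.ofReal * (R h).map Complex.ofReal - 1) =
        ((2 : ℂ) • (R (-h)).map Complex.ofReal) * ((2 : ℂ) • (R h).map Complex.ofReal)
          - (4 : ℂ) • (1 : Matrix (Fin d) (Fin d) ℂ) := by
      rw [smul_mul_assoc, mul_smul_comm, smul_smul, smul_sub]
      norm_num
    rw [h4, hRc (-h), hRc h]
    -- now use the ring identity with `P (-h) * Q h = 1` and `Q (-h) * P h = 1`
    have hbc : Q (-h) * P h = 1 := by
      have := hQP (-h)
      rwa [neg_neg] at this
    have had : P (-h) * Q h = 1 := hPQ h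
    simp only [hJdef]
    have expand : (P (-h) + Q (-h)) * (P h + Q h) - (4 : ℂ) • (1 : Matrix (Fin d) (Fin d) ℂ) =
        (P (-h) - Q (-h)) * (P h - Q h) +
          ((2 : ℂ) • (P (-h) * Q h) + (2 : ℂ) • (Q (-h) * P h)
            - (4 : ℂ) • (1 : Matrix (Fin d) (Fin d) ℂ)) := by
      simp only [mul_add, add_mul, mul_sub, sub_mul, two_smul, smul_sub]
      abel
    rw [expand, had, hbc]
    have : (2 : ℂ) • (1 : Matrix (Fin d) (Fin d) ℂ) + (2 : ℂ) • (1 : Matrix (Fin d) (Fin d) ℂ)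
        - (4 : ℂ) • (1 : Matrix (Fin d) (Fin d) ℂ) = 0 := by
      rw [← add_smul]
      norm_num
    rw [this, add_zero]
  -- conclude
  have hsmul : (fun h : ℝ => (4 : ℂ) • ((R (-h) * R h - 1).map Complex.ofReal))
      =O[nhds 0] fun h : ℝ => h ^ (4 * n + 4) := by
    have hfun : (fun h : ℝ => (4 : ℂ) • ((R (-h) * R h - 1).map Complex.ofReal)) =
        fun h : ℝ => J (-h) * J h := funext hfinal
    rw [hfun]
    exact hJJ
  have hcomplex : (fun h : ℝ => (R (-h) * R h - 1).map Complex.ofReal)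
      =O[nhds 0] fun h : ℝ => h ^ (4 * n + 4) :=
    (isBigO_const_smul_left (by norm_num : (4 : ℂ) ≠ 0)).mp hsmul
  rw [sc_mat_isBigO_iff]
  intro i j
  have hent := sc_mat_isBigO_iff.mp hcomplex i j
  refine sc_isBigO_of_norm_eq (f := fun h : ℝ => ((R (-h) * R h - 1).map Complex.ofReal) i j)
    ?_ hent
  intro x
  simp only [Matrix.map_apply, Matrix.sub_apply, Real.norm_eq_abs]
  rw [Complex.norm_real, Real.norm_eq_abs]
end

section
/- Fix d ≥ 1 and work in the algebra M of d×d complex matrices with the operator (or any submultiplicative) norm and matrix exponential exp. Then the function of a pair of matrices (W, W') ↦ (1/2)(exp W + exp W') − exp((W + W')/2) − (1/4)(W² + W'²) + (1/8)(W + W')² is O(‖(W, W')‖³) as (W, W') → (0, 0) in M × M. In particular, (1/2)(exp W + exp W') − exp((W + W')/2) agrees with (1/4)(W² + W'²) − (1/8)(W + W')² up to a remainder of third order in the size of W and W'. -/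
open Matrix Asymptotics Filter NormedSpace

-- Equip `d × d` complex matrices with the (submultiplicative) `L∞` operator norm.
attribute [local instance] Matrix.linftyOpNormedRing Matrix.linftyOpNormedAlgebra

/-- the difference between the average of two matrix exponentials and
the exponential of the average agrees with `(1/4)(W² + W'²) − (1/8)(W + W')²` up to
a remainder which is of third order in `‖(W, W')‖` as `(W, W') → (0, 0)`. -/
theorem average_exp_minus_exp_average_quadratic_expansion
    (d : ℕ) (hd : 1 ≤ d) :
    (fun p : Matrix (Fin d) (Fin d) ℂ × Matrix (Fin d) (Fin d) ℂ =>
        (1 / 2 : ℂ) • (exp p.1 + exp p.2) - exp ((1 / 2 : ℂ) • (p.1 + p.2))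
          - (1 / 4 : ℂ) • (p.1 ^ 2 + p.2 ^ 2) + (1 / 8 : ℂ) • (p.1 + p.2) ^ 2)
      =O[nhds 0] fun p => ‖p‖ ^ 3 := by
  set A := Matrix (Fin d) (Fin d) ℂ
  set E : A → A := fun x => exp x - (1 + x + (2⁻¹ : ℂ) • x ^ 2) with hE
  -- the remainder is O(‖x‖³)
  have hR : E =O[nhds 0] fun x : A => ‖x‖ ^ 3 := by
    have h := (exp_hasFPowerSeriesAt_zero (𝕂 := ℂ) (𝔸 := A)).isBigO_sub_partialSum_pow 3
    have hps : ∀ y : A, (expSeries ℂ A).partialSum 3 y = 1 + y + (2⁻¹ : ℂ) • y ^ 2 := by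
      intro y
      simp [FormalMultilinearSeries.partialSum, Finset.sum_range_succ, expSeries_apply_eq,
        Nat.factorial]
    refine h.congr_left fun y => ?_
    simp only [zero_add, hE]
    exact congrArg (exp y - ·) (hps y)
  -- compose with the three maps
  have t1 : Tendsto (fun p : A × A => p.1) (nhds 0) (nhds 0) := continuous_fst.tendsto' 0 0 rfl
  have t2 : Tendsto (fun p : A × A => p.2) (nhds 0) (nhds 0) := continuous_snd.tendsto' 0 0 rfl
  have t3 : Tendsto (fun p : A × A => (1 / 2 : ℂ) • (p.1 + p.2)) (nhds 0) (nhds 0) := by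
    have : Continuous fun p : A × A => (1 / 2 : ℂ) • (p.1 + p.2) :=
      by fun_prop
    simpa using this.tendsto' 0 0 (by simp)
  have hb : ∀ p : A × A, ‖(1 / 2 : ℂ) • (p.1 + p.2)‖ ≤ ‖p‖ := by
    intro p
    calc ‖(1 / 2 : ℂ) • (p.1 + p.2)‖ ≤ (1/2) * (‖p.1‖ + ‖p.2‖) := by
          rw [norm_smul]
          gcongr
          · simp
          · exact norm_add_le _ _
      _ ≤ (1/2) * (‖p‖ + ‖p‖) := by gcongr <;> [exact norm_fst_le p; exact norm_snd_le p]
      _ = ‖p‖ := by ring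
  have cube : ∀ (f : A × A → A), (∀ p, ‖f p‖ ≤ ‖p‖) → Tendsto f (nhds 0) (nhds 0) →
      (fun p => E (f p)) =O[nhds 0] fun p : A × A => ‖p‖ ^ 3 := by
    intro f hf tf
    refine (hR.comp_tendsto tf).trans (isBigO_of_le _ fun p => ?_)
    simp only [Function.comp, norm_pow, norm_norm]
    rw [Real.norm_of_nonneg (norm_nonneg _)]
    exact pow_le_pow_left₀ (norm_nonneg _) (hf p) 3
  have h1 := cube _ (fun p => norm_fst_le p) t1
  have h2 := cube _ (fun p => norm_snd_le p) t2
  have h3 := cube _ hb t3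
  have key : (fun p : A × A =>
        (1 / 2 : ℂ) • (exp p.1 + exp p.2) - exp ((1 / 2 : ℂ) • (p.1 + p.2))
          - (1 / 4 : ℂ) • (p.1 ^ 2 + p.2 ^ 2) + (1 / 8 : ℂ) • (p.1 + p.2) ^ 2)
      = fun p => (1 / 2 : ℂ) • (E p.1 + E p.2) - E ((1 / 2 : ℂ) • (p.1 + p.2)) := by
    funext p
    simp only [hE]
    rw [smul_pow]
    norm_num
    module
  rw [key]
  exact ((h1.add h2).const_smul_left ((1:ℂ)/2)).sub h3
end

section
/- Let L(z) = M_T(z/2)·M_V(z)·M_T(z/2) be the leapfrog matrix for the harmonic oscillator and let α = 1/2 + (√3/6)·i. Then the two-stage symmetric-conjugate composition Ψ(h) = L(α h)·L(conj(α) h) satisfies: (fun h : ℝ => Ψ(h) − M_H(h)) is O(h⁴) as h → 0, i.e. the composition S_{αh} ∘ S_{ᾱh} is a method of order 3. -/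
open Matrix Asymptotics Filter

attribute [local instance] Matrix.normedAddCommGroup Matrix.normedSpace

/-- Exact evolution matrix of the harmonic oscillator `q' = p`, `p' = -q`. -/
noncomputable def MH (z : ℂ) : Matrix (Fin 2) (Fin 2) ℂ :=
  !![Complex.cos z, Complex.sin z; -Complex.sin z, Complex.cos z]

/-- Exact evolution matrix of the kinetic part. -/
def MT (z : ℂ) : Matrix (Fin 2) (Fin 2) ℂ := !![1, z; 0, 1]

/-- Exact evolution matrix of the potential part. -/
def MV (z : ℂ) : Matrix (Fin 2) (Fin 2) ℂ := !![1, 0; -z, 1]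

/-- The leapfrog/Strang splitting matrix. -/
noncomputable def L (z : ℂ) : Matrix (Fin 2) (Fin 2) ℂ := MT (z / 2) * MV z * MT (z / 2)

/-- The coefficient `α = 1/2 + (√3/6) i`. -/
noncomputable def αc : ℂ := 1 / 2 + (Real.sqrt 3 / 6 : ℝ) * Complex.I

lemma L_eq (z : ℂ) : L z = !![1 - z^2/2, z - z^3/4; -z, 1 - z^2/2] := by
  ext i j
  fin_cases i <;> fin_cases j <;>
    simp [L, MT, MV, Matrix.mul_apply, Fin.sum_univ_two] <;> ring

/-- constants for the proof -/
noncomputable def Kmat : Matrix (Fin 2) (Fin 2) ℂ :=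
  !![1/24 + (Real.sqrt 3 : ℂ) * Complex.I / 72, 0;
     0, 1/24 - (Real.sqrt 3 : ℂ) * Complex.I / 72]

noncomputable def Emat : Matrix (Fin 2) (Fin 2) ℂ := !![0, 1/72; 0, 0]

noncomputable def Rmat (h : ℝ) : Matrix (Fin 2) (Fin 2) ℂ :=
  !![(1 - (h:ℂ)^2/2) - Complex.cos h, ((h:ℂ) - (h:ℂ)^3/6) - Complex.sin h;
     Complex.sin h - ((h:ℂ) - (h:ℂ)^3/6), (1 - (h:ℂ)^2/2) - Complex.cos h]

lemma conj_αc : starRingEnd ℂ αc = 1 / 2 - (Real.sqrt 3 / 6 : ℝ) * Complex.I := by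
  rw [αc, show (1/2 : ℂ) = ((1/2 : ℝ) : ℂ) by norm_num]
  rw [_root_.map_add, _root_.map_mul, Complex.conj_ofReal, Complex.conj_ofReal, Complex.conj_I]
  push_cast
  ring

lemma hu : ((Real.sqrt 3 : ℝ) : ℂ) * Complex.I * ((Real.sqrt 3 : ℝ) : ℂ) * Complex.I = -3 := by
  have h3 : ((Real.sqrt 3 : ℝ) : ℂ) * ((Real.sqrt 3 : ℝ) : ℂ) = 3 := by
    rw [← Complex.ofReal_mul, Real.mul_self_sqrt (by norm_num : (0:ℝ) ≤ 3)]
    norm_num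
  calc ((Real.sqrt 3 : ℝ) : ℂ) * Complex.I * ((Real.sqrt 3 : ℝ) : ℂ) * Complex.I
      = (((Real.sqrt 3 : ℝ) : ℂ) * ((Real.sqrt 3 : ℝ) : ℂ)) * (Complex.I * Complex.I) := by ring
    _ = -3 := by rw [h3, Complex.I_mul_I]; ring

lemma key (h : ℝ) :
    L (αc * (h : ℂ)) * L (starRingEnd ℂ αc * (h : ℂ)) - MH (h : ℂ)
      = ((h:ℂ)^4) • Kmat + ((h:ℂ)^5) • Emat + Rmat h := by
  have hu2 : (((Real.sqrt 3 : ℝ) : ℂ) * Complex.I) ^ 2 = -3 := by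
    rw [sq, ← mul_assoc]; exact hu
  rw [L_eq, L_eq, conj_αc]
  ext i j
  fin_cases i <;> fin_cases j <;>
    · simp [αc, MH, Kmat, Emat, Rmat, Matrix.mul_apply, Fin.sum_univ_two]
      push_cast
      set s : ℂ := ((Real.sqrt 3 : ℝ) : ℂ)
      first
      | linear_combination (-(s*Complex.I)*(h:ℂ)^4/864 - (h:ℂ)^4/288) * hu2
      | linear_combination ((s*Complex.I)^2*(h:ℂ)^5/10368 - 7*(h:ℂ)^5/3456 - (h:ℂ)^3/144) * hu2
      | linear_combination (-(h:ℂ)^3/72) * hu2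
      | linear_combination ((s*Complex.I)*(h:ℂ)^4/864 - (h:ℂ)^4/288) * hu2

/-- the two-stage symmetric-conjugate composition
`S_{αh} ∘ S_{ᾱh}` with `α = 1/2 + (√3/6) i` is a method of order 3 for the
harmonic oscillator. -/
theorem two_stage_symmetric_conjugate_order_three :
    (fun h : ℝ => L (αc * (h : ℂ)) * L (starRingEnd ℂ αc * (h : ℂ)) - MH (h : ℂ))
      =O[nhds 0] fun h : ℝ => h ^ 4 := by
  have hrw : (fun h : ℝ => L (αc * (h : ℂ)) * L (starRingEnd ℂ αc * (h : ℂ)) - MH (h : ℂ))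
      = fun h : ℝ => ((h:ℂ)^4) • Kmat + ((h:ℂ)^5) • Emat + Rmat h := funext key
  rw [hrw]
  have h1 : (fun h : ℝ => ((h:ℂ)^4) • Kmat) =O[nhds 0] fun h : ℝ => h ^ 4 := by
    apply IsBigO.of_bound ‖Kmat‖
    filter_upwards with h
    rw [norm_smul]
    simp [abs_pow, mul_comm]
  have h2 : (fun h : ℝ => ((h:ℂ)^5) • Emat) =O[nhds 0] fun h : ℝ => h ^ 4 := by
    apply IsBigO.of_bound ‖Emat‖
    filter_upwards [Metric.eventually_nhds_iff.2 ⟨1, one_pos, fun {h} hh => hh⟩] with h hh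
    simp only [Metric.ball, dist_zero_right, Real.norm_eq_abs] at hh
    rw [norm_smul]
    have h5 : ‖(h:ℂ)^5‖ ≤ |h|^4 := by
      rw [norm_pow, Complex.norm_real, Real.norm_eq_abs]
      calc |h|^5 = |h|^4 * |h| := by ring
        _ ≤ |h|^4 * 1 := by
            apply mul_le_mul_of_nonneg_left (le_of_lt hh) (by positivity)
        _ = |h|^4 := by ring
    calc ‖(h:ℂ)^5‖ * ‖Emat‖ ≤ |h|^4 * ‖Emat‖ := by
          apply mul_le_mul_of_nonneg_right h5 (norm_nonneg _)
      _ = ‖Emat‖ * ‖h^4‖ := by rw [Real.norm_eq_abs, abs_pow]; ring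
  have h3 : (fun h : ℝ => Rmat h) =O[nhds 0] fun h : ℝ => h ^ 4 := by
    apply IsBigO.of_bound (5/96)
    filter_upwards [Metric.eventually_nhds_iff.2 ⟨1, one_pos, fun {h} hh => hh⟩] with h hh
    simp only [Metric.ball, dist_zero_right, Real.norm_eq_abs] at hh
    have hh1 : |h| ≤ 1 := le_of_lt hh
    have hcos : ‖(1 - (h:ℂ)^2/2) - Complex.cos h‖ ≤ 5/96 * ‖h^4‖ := by
      have : (1 - (h:ℂ)^2/2) - Complex.cos h = ((1 - h^2/2 - Real.cos h : ℝ) : ℂ) := by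
        push_cast
        ring
      rw [this, Complex.norm_real, Real.norm_eq_abs, Real.norm_eq_abs, abs_pow]
      calc |1 - h^2/2 - Real.cos h| = |Real.cos h - (1 - h^2/2)| := by rw [abs_sub_comm]
        _ ≤ |h|^4 * (5/96) := Real.cos_bound hh1
        _ = 5/96 * |h|^4 := by ring
    have hsin : ‖((h:ℂ) - (h:ℂ)^3/6) - Complex.sin h‖ ≤ 5/96 * ‖h^4‖ := by
      have : ((h:ℂ) - (h:ℂ)^3/6) - Complex.sin h = ((h - h^3/6 - Real.sin h : ℝ) : ℂ) := by
        push_cast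
        ring
      rw [this, Complex.norm_real, Real.norm_eq_abs, Real.norm_eq_abs, abs_pow]
      calc |h - h^3/6 - Real.sin h| = |Real.sin h - (h - h^3/6)| := by rw [abs_sub_comm]
        _ ≤ |h|^4 * (5/96) := by
            have hsb := Real.sin_bound hh1
            have h54 : |h|^5 ≤ |h|^4 := by
              calc |h|^5 = |h|^4 * |h| := by ring
                _ ≤ |h|^4 * 1 := mul_le_mul_of_nonneg_left hh1 (by positivity)
                _ = |h|^4 := by ring
            linarith [pow_nonneg (abs_nonneg h) 4]
        _ = 5/96 * |h|^4 := by ring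
    have hsin' : ‖Complex.sin h - ((h:ℂ) - (h:ℂ)^3/6)‖ ≤ 5/96 * ‖h^4‖ := by
      rw [norm_sub_rev]; exact hsin
    rw [Matrix.norm_le_iff (by positivity)]
    intro i j
    fin_cases i <;> fin_cases j <;>
      first
      | simpa [Rmat] using hcos
      | simpa [Rmat] using hsin
      | simpa [Rmat] using hsin'
  exact (h1.add h2).add h3
end

section
/- Let L(z) = M_T(z/2)·M_V(z)·M_T(z/2) be the leapfrog matrix for the harmonic oscillator, let α = 1/2 + (√3/6)·i, and let R(h) be the entrywise real part of the matrix L(α h)·L(conj(α) h). Then (fun h : ℝ => R(h) − M_H(h)) is O(h⁵) as h → 0; that is, projecting the third-order symmetric-conjugate composition S_{αh} ∘ S_{ᾱh} onto the real axis yields a method of order 4 for the harmonic oscillator. -/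
open Matrix Asymptotics Filter

attribute [local instance] Matrix.normedAddCommGroup Matrix.normedSpace

/-- The real projection of the composition `S_{αh} ∘ S_{ᾱh}`. -/
noncomputable def Rproj (h : ℝ) : Matrix (Fin 2) (Fin 2) ℝ :=
  (L (αc * (h : ℂ)) * L (starRingEnd ℂ αc * (h : ℂ))).map Complex.re

/-- Exact (real) evolution matrix of the harmonic oscillator. -/
noncomputable def MHr (h : ℝ) : Matrix (Fin 2) (Fin 2) ℝ :=
  !![Real.cos h, Real.sin h; -Real.sin h, Real.cos h]

open Finset in
lemma cos_tay {x : ℝ} (hx : |x| ≤ 1) :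
    |Real.cos x - (1 - x^2/2 + x^4/24)| ≤ |x|^5 := by
  have habs : ‖(x:ℂ) * Complex.I‖ = |x| := by simp
  have hb := Complex.exp_bound (x := (x:ℂ) * Complex.I) (by simpa [habs]) (n := 6) (by norm_num)
  rw [habs] at hb
  have hsum : (∑ m ∈ range 6, ((x:ℂ) * Complex.I) ^ m / m.factorial) =
      ((1 - x^2/2 + x^4/24 : ℝ) : ℂ) + ((x - x^3/6 + x^5/120 : ℝ) : ℂ) * Complex.I := by
    apply Complex.ext <;>
      simp [Finset.sum_range_succ, div_eq_mul_inv, Nat.factorial, pow_succ, Complex.I_mul_I] <;>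
      ring
  have hre : Real.cos x - (1 - x^2/2 + x^4/24) =
      (Complex.exp ((x:ℂ) * Complex.I) - ∑ m ∈ range 6, ((x:ℂ) * Complex.I) ^ m / m.factorial).re := by
    rw [hsum]; simp [Complex.exp_ofReal_mul_I_re, ← Complex.ofReal_pow]
  rw [hre]
  calc |(Complex.exp ((x:ℂ) * Complex.I) - ∑ m ∈ range 6, ((x:ℂ) * Complex.I) ^ m / m.factorial).re|
      ≤ ‖(Complex.exp ((x:ℂ) * Complex.I) -
          ∑ m ∈ range 6, ((x:ℂ) * Complex.I) ^ m / m.factorial)‖ := Complex.abs_re_le_norm _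
    _ ≤ |x| ^ 6 * ((6:ℕ).succ * ((Nat.factorial 6 : ℝ) * (6:ℕ))⁻¹) := hb
    _ ≤ |x| ^ 5 := by
        have h6 : |x| ^ 6 ≤ |x| ^ 5 := pow_le_pow_of_le_one (abs_nonneg x) hx (by norm_num)
        have h5 : (0:ℝ) ≤ |x| ^ 5 := pow_nonneg (abs_nonneg x) 5
        have : ((6:ℕ).succ * ((Nat.factorial 6 : ℝ) * (6:ℕ))⁻¹) ≤ 1 := by
          norm_num [Nat.factorial]
        nlinarith [pow_nonneg (abs_nonneg x) 6]

open Finset in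
lemma sin_tay {x : ℝ} (hx : |x| ≤ 1) :
    |Real.sin x - (x - x^3/6)| ≤ |x|^5 / 2 := by
  have habs : ‖(x:ℂ) * Complex.I‖ = |x| := by simp
  have hb := Complex.exp_bound (x := (x:ℂ) * Complex.I) (by simpa [habs]) (n := 5) (by norm_num)
  rw [habs] at hb
  have hsum : (∑ m ∈ range 5, ((x:ℂ) * Complex.I) ^ m / m.factorial) =
      ((1 - x^2/2 + x^4/24 : ℝ) : ℂ) + ((x - x^3/6 : ℝ) : ℂ) * Complex.I := by
    apply Complex.ext <;>
      simp [Finset.sum_range_succ, div_eq_mul_inv, Nat.factorial, pow_succ, Complex.I_mul_I] <;>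
      ring
  have hre : Real.sin x - (x - x^3/6) =
      (Complex.exp ((x:ℂ) * Complex.I) - ∑ m ∈ range 5, ((x:ℂ) * Complex.I) ^ m / m.factorial).im := by
    rw [hsum]; simp [Complex.exp_ofReal_mul_I_im, ← Complex.ofReal_pow]
  rw [hre]
  calc |(Complex.exp ((x:ℂ) * Complex.I) - ∑ m ∈ range 5, ((x:ℂ) * Complex.I) ^ m / m.factorial).im|
      ≤ ‖(Complex.exp ((x:ℂ) * Complex.I) -
          ∑ m ∈ range 5, ((x:ℂ) * Complex.I) ^ m / m.factorial)‖ := Complex.abs_im_le_norm _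
    _ ≤ |x| ^ 5 * ((5:ℕ).succ * ((Nat.factorial 5 : ℝ) * (5:ℕ))⁻¹) := hb
    _ ≤ |x| ^ 5 / 2 := by
        have h5 : (0:ℝ) ≤ |x| ^ 5 := pow_nonneg (abs_nonneg x) 5
        have : ((5:ℕ).succ * ((Nat.factorial 5 : ℝ) * (5:ℕ))⁻¹) ≤ 1/2 := by
          norm_num [Nat.factorial]
        nlinarith

set_option maxHeartbeats 1000000 in
lemma Rproj_eq (h : ℝ) : Rproj h =
    !![1 - h^2/2 + h^4/24, h - h^3/6 + h^5/72; -h + h^3/6, 1 - h^2/2 + h^4/24] := by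
  have h3 : Real.sqrt 3 ^ 2 = 3 := Real.sq_sqrt (by norm_num)
  have h34 : Real.sqrt 3 ^ 4 = 9 := by
    rw [show (4:ℕ) = 2*2 from rfl, pow_mul, h3]; norm_num
  have hre : αc.re = 1/2 := by simp [αc]
  have him : αc.im = Real.sqrt 3/6 := by simp [αc]
  have h1 : αc * (h : ℂ) = ((h/2 : ℝ):ℂ) + ((Real.sqrt 3/6*h : ℝ):ℂ) * Complex.I := by
    apply Complex.ext <;> simp [Complex.mul_re, Complex.mul_im, hre, him] <;> ring
  have h2 : starRingEnd ℂ αc * (h : ℂ) =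
      ((h/2 : ℝ):ℂ) - ((Real.sqrt 3/6*h : ℝ):ℂ) * Complex.I := by
    apply Complex.ext <;> simp [Complex.mul_re, Complex.mul_im, hre, him] <;> ring
  ext i j
  fin_cases i <;> fin_cases j <;>
  · simp only [Rproj, Matrix.map_apply, Matrix.mul_apply, Fin.sum_univ_two, L_eq, h1, h2]
    norm_num [Matrix.cons_val_zero, Matrix.cons_val_one, Matrix.head_cons]
    simp only [pow_succ, pow_zero, one_mul, Complex.add_re, Complex.add_im, Complex.sub_re,
      Complex.sub_im, Complex.mul_re, Complex.mul_im, Complex.neg_re, Complex.neg_im,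
      Complex.ofReal_re, Complex.ofReal_im, Complex.I_re, Complex.I_im, Complex.one_re,
      Complex.one_im, Complex.div_ofNat_re, Complex.div_ofNat_im]
    first
      | linear_combination (h^4/288) * h3
      | linear_combination (h^3/144 + h^5/576) * h3 + (h^5/10368) * h34
      | linear_combination (h^3/72) * h3

/-- projecting the third-order symmetric-conjugate composition
`S_{αh} ∘ S_{ᾱh}` onto the real axis yields a method of order 4 for the
harmonic oscillator. -/
theorem projected_two_stage_composition_order_four :
    (fun h : ℝ => Rproj h - MHr h) =O[nhds 0] fun h : ℝ => h ^ 5 := by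
  refine Asymptotics.isBigO_iff.2 ⟨2, ?_⟩
  filter_upwards [Metric.ball_mem_nhds (0:ℝ) one_pos] with h hh
  replace hh : |h| ≤ 1 := by
    rw [Metric.mem_ball, Real.dist_eq, sub_zero] at hh; exact hh.le
  have hn5 : ‖h ^ 5‖ = |h| ^ 5 := by rw [Real.norm_eq_abs, abs_pow]
  rw [hn5]
  have hcos := cos_tay hh
  have hsin := sin_tay hh
  have habs5 : |h ^ 5| = |h| ^ 5 := abs_pow h 5
  have h5nn : (0:ℝ) ≤ |h| ^ 5 := pow_nonneg (abs_nonneg h) 5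
  refine (Matrix.norm_le_iff (by positivity)).2 fun i j => ?_
  rw [Rproj_eq]
  fin_cases i <;> fin_cases j <;>
    simp only [MHr, Matrix.sub_apply, Matrix.cons_val', Matrix.cons_val_zero, Matrix.cons_val_one,
      Matrix.head_cons, Matrix.head_fin_const, Matrix.empty_val', Matrix.cons_val_fin_one,
      Real.norm_eq_abs]
  · calc |1 - h^2/2 + h^4/24 - Real.cos h|
        = |Real.cos h - (1 - h^2/2 + h^4/24)| := abs_sub_comm _ _
      _ ≤ |h| ^ 5 := hcos
      _ ≤ 2 * |h| ^ 5 := by linarith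
  · calc |h - h^3/6 + h^5/72 - Real.sin h|
        = |-(Real.sin h - (h - h^3/6)) + h^5/72| := by ring_nf
      _ ≤ |-(Real.sin h - (h - h^3/6))| + |h^5/72| := abs_add_le _ _
      _ = |Real.sin h - (h - h^3/6)| + |h^5| / 72 := by rw [abs_neg, abs_div]; norm_num
      _ ≤ |h| ^ 5 / 2 + |h| ^ 5 / 72 := by rw [habs5]; linarith
      _ ≤ 2 * |h| ^ 5 := by linarith
  · calc |-h + h^3/6 - -Real.sin h|
        = |Real.sin h - (h - h^3/6)| := by ring_nf
      _ ≤ |h| ^ 5 / 2 := hsin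
      _ ≤ 2 * |h| ^ 5 := by linarith
  · calc |1 - h^2/2 + h^4/24 - Real.cos h|
        = |Real.cos h - (1 - h^2/2 + h^4/24)| := abs_sub_comm _ _
      _ ≤ |h| ^ 5 := hcos
      _ ≤ 2 * |h| ^ 5 := by linarith
end
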